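/- arXiv:2012.11231 — 8 statements merged into one kernel-verified Lean document; each statement's English description precedes it below -/
import Mathlib

section
/- Let F: ℕ → ℂ have Eratosthenes transform F' = F ∗ μ (Dirichlet convolution with the Möbius function). For every fixed a ∈ ℕ and every prime P ≥ a, F(a) = ∑_{d P-smooth} (F'(d)/d) · ∑_{q P-smooth, q | d} c_q(a), where the outer sum is a finite sum (only divisors d of a contribute). -/
open scoped BigOperators Classical

/-- `n` is `P`-smooth: every prime factor of `n` is at most `P`. -/
def IsSmooth (P n : ℕ) : Prop := ∀ p : ℕ, p.Prime → p ∣ n → p ≤ P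

/-- The Ramanujan sum `c_q(a)`, via Kluyver's formula. -/
noncomputable def ramanujanSum (q a : ℕ) : ℤ :=
  ∑ d ∈ (Nat.gcd a q).divisors, (d : ℤ) * ArithmeticFunction.moebius (q / d)

/-- The Eratosthenes transform `F' = F ∗ μ` (Dirichlet convolution with Möbius). -/
noncomputable def eratosthenes (F : ℕ → ℂ) (d : ℕ) : ℂ :=
  ∑ e ∈ d.divisors, (ArithmeticFunction.moebius (d / e) : ℂ) * F e

open ArithmeticFunction ArithmeticFunction.Moebius in
/-- Key identity: `∑_{q | d} c_q(a) = d` if `d ∣ a`, else `0`. -/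
lemma sum_ramanujan (a : ℕ) (ha : 0 < a) (d : ℕ) (hd : 0 < d) :
    ∑ q ∈ d.divisors, ramanujanSum q a = if d ∣ a then (d : ℤ) else 0 := by
  set f : ArithmeticFunction ℤ := ⟨fun e => if e ∣ a then (e : ℤ) else 0, by simp⟩ with hf
  have hfe : ∀ e : ℕ, f e = if e ∣ a then (e : ℤ) else 0 := fun e => rfl
  have hfq : ∀ q ∈ d.divisors, ramanujanSum q a = (f * (μ : ArithmeticFunction ℤ)) q := by
    intro q hq
    have hq0 : 0 < q := Nat.pos_of_mem_divisors hq
    rw [mul_apply, Nat.sum_divisorsAntidiagonal (fun x y => f x * μ y)]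
    unfold ramanujanSum
    simp only [hfe, ite_mul, zero_mul]
    rw [← Finset.sum_filter]
    apply Finset.sum_congr _ fun _ _ => rfl
    ext e
    simp only [Nat.mem_divisors, Finset.mem_filter, Nat.dvd_gcd_iff]
    constructor
    · rintro ⟨⟨h1, h2⟩, _⟩; exact ⟨⟨h2, hq0.ne'⟩, h1⟩
    · rintro ⟨⟨h2, _⟩, h1⟩; exact ⟨⟨h1, h2⟩, Nat.gcd_ne_zero_right hq0.ne'⟩
  rw [Finset.sum_congr rfl hfq, ← coe_mul_zeta_apply, mul_assoc, moebius_mul_coe_zeta,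
    mul_one, hfe]

/-- Divisors of `a` are `P`-smooth for `a ≤ P`. -/
lemma dvd_isSmooth {a P d : ℕ} (ha : 0 < a) (haP : a ≤ P) (hda : d ∣ a) : IsSmooth P d :=
  fun p hp hpd => le_trans (Nat.le_of_dvd ha (hpd.trans hda)) haP

lemma smooth_filter_eq {P d : ℕ} (hd : IsSmooth P d) :
    d.divisors.filter (IsSmooth P) = d.divisors := by
  apply Finset.filter_true_of_mem
  intro q hq p hp hpq
  exact hd p hp (hpq.trans (Nat.dvd_of_mem_divisors hq))

open ArithmeticFunction ArithmeticFunction.Moebius in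
/-- Möbius inversion: `F a = ∑_{d | a} (F ∗ μ)(d)`. -/
lemma sum_eratosthenes (F : ℕ → ℂ) (a : ℕ) (ha : 0 < a) :
    ∑ d ∈ a.divisors, eratosthenes F d = F a := by
  refine (sum_eq_iff_sum_mul_moebius_eq (f := fun d => eratosthenes F d)
    (g := F)).mpr ?_ a ha
  intro n hn
  rw [Nat.sum_divisorsAntidiagonal' (f := fun x y => (μ x : ℂ) * F y)]
  rfl

/-- For `F : ℕ → ℂ`, fixed `a ≥ 1` and a prime `P ≥ a`:
`F(a) = ∑_{d P-smooth} (F'(d)/d) ∑_{q P-smooth, q | d} c_q(a)`, and only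
divisors `d` of `a` contribute (so the outer sum is a finite sum). -/
theorem stmt4 (F : ℕ → ℂ) (a : ℕ) (ha : 0 < a) (P : ℕ) (hP : P.Prime) (haP : a ≤ P) :
    (∀ d : ℕ, 0 < d → IsSmooth P d →
        (eratosthenes F d / d) *
          (∑ q ∈ d.divisors.filter (IsSmooth P), (ramanujanSum q a : ℂ)) ≠ 0 → d ∣ a) ∧
      F a = ∑' d : {d : ℕ // 0 < d ∧ IsSmooth P d},
        (eratosthenes F d / (d : ℕ)) *
          (∑ q ∈ (d : ℕ).divisors.filter (IsSmooth P), (ramanujanSum q a : ℂ)) := by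
  have key : ∀ d : ℕ, 0 < d → IsSmooth P d →
      (∑ q ∈ d.divisors.filter (IsSmooth P), (ramanujanSum q a : ℂ))
        = if d ∣ a then (d : ℂ) else 0 := by
    intro d hd hds
    rw [smooth_filter_eq hds]
    have h := sum_ramanujan a ha d hd
    calc (∑ q ∈ d.divisors, (ramanujanSum q a : ℂ))
        = ((∑ q ∈ d.divisors, ramanujanSum q a : ℤ) : ℂ) := by push_cast; rfl
      _ = _ := by rw [h]; split <;> simp
  have term_eq : ∀ d : ℕ, 0 < d → IsSmooth P d →
      (eratosthenes F d / d) *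
        (∑ q ∈ d.divisors.filter (IsSmooth P), (ramanujanSum q a : ℂ))
      = if d ∣ a then eratosthenes F d else 0 := by
    intro d hd hds
    rw [key d hd hds]
    split
    · exact div_mul_cancel₀ _ (Nat.cast_ne_zero.mpr hd.ne')
    · ring
  constructor
  · intro d hd hds hne
    by_contra hnd
    rw [term_eq d hd hds, if_neg hnd] at hne
    · exact hne rfl
  · set p : ℕ → Prop := fun d => 0 < d ∧ IsSmooth P d with hp
    set g : ℕ → ℂ := fun d =>
      (eratosthenes F d / (d : ℕ)) *
        (∑ q ∈ d.divisors.filter (IsSmooth P), (ramanujanSum q a : ℂ)) with hg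
    have hsub : ∀ d : ℕ, d ∈ a.divisors → p d := by
      intro d hd
      exact ⟨Nat.pos_of_mem_divisors hd, dvd_isSmooth ha haP (Nat.dvd_of_mem_divisors hd)⟩
    have htsum : ∑' d : {d : ℕ // p d}, g (d : ℕ) = ∑ d ∈ a.divisors.subtype p, g (d : ℕ) := by
      apply tsum_eq_sum
      intro b hb
      have hbd : ¬ (b : ℕ) ∣ a := by
        intro hdvd
        exact hb (Finset.mem_subtype.mpr (Nat.mem_divisors.mpr ⟨hdvd, ha.ne'⟩))
      show (eratosthenes F b / (b : ℕ)) *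
        (∑ q ∈ (b : ℕ).divisors.filter (IsSmooth P), (ramanujanSum q a : ℂ)) = 0
      rw [term_eq b b.2.1 b.2.2, if_neg hbd]
    show F a = ∑' d : {d : ℕ // p d}, g (d : ℕ)
    rw [htsum, Finset.sum_subtype_eq_sum_filter, Finset.filter_true_of_mem hsub]
    rw [← sum_eratosthenes F a ha]
    apply Finset.sum_congr rfl
    intro d hd
    exact ((term_eq d (Nat.pos_of_mem_divisors hd)
      (dvd_isSmooth ha haP (Nat.dvd_of_mem_divisors hd))).trans
      (if_pos (Nat.dvd_of_mem_divisors hd))).symm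
end

section
/- (Wintner's Dream Theorem) Let F: ℕ → ℂ with Eratosthenes transform F' = F ∗ μ satisfy the Wintner Assumption ∑_{d=1}^∞ |F'(d)|/d < ∞. Then for every a ∈ ℕ, the P-smooth partial sums of the Ramanujan expansion with Wintner coefficients converge to F(a): lim_{P→∞, P prime} ∑_{q P-smooth} (Win_q F) · c_q(a) = F(a), where Win_q F = ∑_{d ≡ 0 mod q} F'(d)/d. -/
open scoped BigOperators Classical
open Filter

/-- The Wintner coefficient `Win_q F = ∑_{d ≡ 0 mod q} F'(d)/d`. -/
noncomputable def winCoeff (F : ℕ → ℂ) (q : ℕ) : ℂ :=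
  ∑' d : ℕ, if q ∣ d then eratosthenes F d / d else 0

namespace WintnerAux

open ArithmeticFunction Finset

lemma erat_zero (F : ℕ → ℂ) : eratosthenes F 0 = 0 := by
  simp [eratosthenes]

/-- The arithmetic function `e ↦ e·[e ∣ a]`. -/
noncomputable def fA (a : ℕ) : ArithmeticFunction ℤ :=
  ⟨fun e => if e ∣ a then (e : ℤ) else 0, by simp⟩

lemma ramanujan_eq_mul (a q : ℕ) :
    ramanujanSum q a = (fA a * ArithmeticFunction.moebius) q := by
  rcases eq_or_ne q 0 with rfl | hq
  · simp [ramanujanSum]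
  · rw [ArithmeticFunction.mul_apply, Nat.sum_divisorsAntidiagonal
      (fun i j => fA a i * ArithmeticFunction.moebius j)]
    have hdiv : (Nat.gcd a q).divisors = q.divisors.filter (· ∣ a) := by
      ext e
      simp only [Nat.mem_divisors, Finset.mem_filter]
      constructor
      · intro ⟨h1, _⟩
        exact ⟨⟨h1.trans (Nat.gcd_dvd_right a q), hq⟩, h1.trans (Nat.gcd_dvd_left a q)⟩
      · intro ⟨⟨h1, _⟩, h2⟩
        exact ⟨Nat.dvd_gcd h2 h1, Nat.gcd_ne_zero_right hq⟩
    rw [ramanujanSum, hdiv, Finset.sum_filter]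
    apply Finset.sum_congr rfl
    intro e _
    simp only [fA, ArithmeticFunction.coe_mk]
    split <;> simp

lemma sum_ramanujan (a m : ℕ) :
    ∑ q ∈ m.divisors, ramanujanSum q a = if m ∣ a then (m : ℤ) else 0 := by
  have h1 : ∑ q ∈ m.divisors, ramanujanSum q a
      = ((fA a * ArithmeticFunction.moebius) * ArithmeticFunction.zeta) m := by
    rw [ArithmeticFunction.coe_mul_zeta_apply]
    exact Finset.sum_congr rfl fun q _ => ramanujan_eq_mul a q
  rw [h1, mul_assoc, ArithmeticFunction.moebius_mul_coe_zeta, mul_one]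
  rfl

lemma ramanujan_eq_zero {a q p : ℕ} (ha : a ≠ 0) (hq : q ≠ 0) (hp : p.Prime)
    (h : p ^ (a.factorization p + 2) ∣ q) : ramanujanSum q a = 0 := by
  apply Finset.sum_eq_zero
  intro e he
  rw [Nat.mem_divisors] at he
  have hea : e ∣ a := he.1.trans (Nat.gcd_dvd_left a q)
  have heq : e ∣ q := he.1.trans (Nat.gcd_dvd_right a q)
  have he0 : e ≠ 0 := fun h0 => ha (by simpa [h0] using hea)
  have hqe0 : q / e ≠ 0 := by
    have := Nat.div_pos (Nat.le_of_dvd (Nat.pos_of_ne_zero hq) heq) (Nat.pos_of_ne_zero he0)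
    omega
  have hvq : a.factorization p + 2 ≤ q.factorization p :=
    (hp.pow_dvd_iff_le_factorization hq).mp h
  have hve : e.factorization p ≤ a.factorization p :=
    ((Nat.factorization_le_iff_dvd he0 ha).mpr hea) p
  have h2 : 2 ≤ (q / e).factorization p := by
    rw [Nat.factorization_div heq]
    simp only [Finsupp.tsub_apply]
    omega
  have hpp : p * p ∣ q / e := by
    have := (hp.pow_dvd_iff_le_factorization hqe0).mpr h2
    rwa [pow_two] at this
  have hns : ¬ Squarefree (q / e) := fun hs => hp.one_lt.ne' (Nat.isUnit_iff.mp (hs p hpp))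
  rw [ArithmeticFunction.moebius_eq_zero_of_not_squarefree hns, mul_zero]

lemma primorial_factorization {P p : ℕ} (hp : p.Prime) (hpP : p ≤ P) :
    (primorial P).factorization p = 1 := by
  rw [primorial, Nat.factorization_prod (fun q hq => (Finset.mem_filter.mp hq).2.pos.ne')]
  rw [Finset.sum_apply']
  rw [Finset.sum_eq_single p]
  · rw [hp.factorization, Finsupp.single_eq_same]
  · intro q hq hne
    rw [(Finset.mem_filter.mp hq).2.factorization, Finsupp.single_apply, if_neg hne]
  · intro hmem
    exact absurd (Finset.mem_filter.mpr ⟨Finset.mem_range.mpr (by omega), hp⟩) hmem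

lemma ramanujan_eq_zero' {P a q : ℕ} (ha : a ≠ 0) (hq : q ≠ 0) (hsm : IsSmooth P q)
    (hnd : ¬ q ∣ a * primorial P) : ramanujanSum q a = 0 := by
  have hap : a * primorial P ≠ 0 := Nat.mul_ne_zero ha (primorial_pos P).ne'
  rw [← Nat.factorization_le_iff_dvd hq hap, Finsupp.le_def] at hnd
  push_neg at hnd
  obtain ⟨p, hlt⟩ := hnd
  have hpq : q.factorization p ≠ 0 := by
    intro h0; rw [h0] at hlt; omega
  have hpmem : p ∈ q.primeFactors := by
    rw [← Nat.support_factorization]; exact Finsupp.mem_support_iff.mpr hpq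
  have hp : p.Prime := Nat.prime_of_mem_primeFactors hpmem
  have hpdvd : p ∣ q := Nat.dvd_of_mem_primeFactors hpmem
  have hpP : p ≤ P := hsm p hp hpdvd
  have hfac : (a * primorial P).factorization p = a.factorization p + 1 := by
    rw [Nat.factorization_mul ha (primorial_pos P).ne', Finsupp.add_apply,
      primorial_factorization hp hpP]
  rw [hfac] at hlt
  exact ramanujan_eq_zero ha hq hp
    ((hp.pow_dvd_iff_le_factorization hq).mpr (by omega))

/-- The `P`-smooth part of `d`. -/
noncomputable def smoothPart (P d : ℕ) : ℕ :=
  ∏ p ∈ d.primeFactors.filter (· ≤ P), p ^ d.factorization p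

lemma smoothPart_pos (P d : ℕ) : 0 < smoothPart P d := by
  apply Finset.prod_pos
  intro p hp
  exact pow_pos (Nat.prime_of_mem_primeFactors (Finset.mem_filter.mp hp).1).pos _

lemma smoothPart_dvd (P d : ℕ) : smoothPart P d ∣ d := by
  rcases eq_or_ne d 0 with rfl | hd
  · exact dvd_zero _
  · have h2 : ∏ p ∈ d.primeFactors, p ^ d.factorization p = d := by
      rw [← Nat.support_factorization]
      exact Nat.factorization_prod_pow_eq_self hd
    calc smoothPart P d ∣ ∏ p ∈ d.primeFactors, p ^ d.factorization p :=
          Finset.prod_dvd_prod_of_subset _ _ _ (Finset.filter_subset _ _)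
      _ = d := h2

lemma smoothPart_factorization (P d : ℕ) (p : ℕ) (hd : d ≠ 0)
    (hmem : p ∈ d.primeFactors.filter (· ≤ P)) :
    (smoothPart P d).factorization p = d.factorization p := by
  have hprime : ∀ q ∈ d.primeFactors.filter (· ≤ P), q ^ d.factorization q ≠ 0 :=
    fun q hq => pow_ne_zero _ (Nat.prime_of_mem_primeFactors (Finset.mem_filter.mp hq).1).pos.ne'
  rw [smoothPart, Nat.factorization_prod hprime, Finset.sum_apply']
  rw [Finset.sum_eq_single p]
  · rw [Nat.Prime.factorization_pow (Nat.prime_of_mem_primeFactors (Finset.mem_filter.mp hmem).1),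
      Finsupp.single_eq_same]
  · intro q hq hne
    rw [Nat.Prime.factorization_pow (Nat.prime_of_mem_primeFactors (Finset.mem_filter.mp hq).1),
      Finsupp.single_apply, if_neg hne]
  · intro h; exact absurd hmem h

lemma dvd_smoothPart_iff {P d q : ℕ} (hd : d ≠ 0) (hq : q ≠ 0) :
    q ∣ smoothPart P d ↔ q ∣ d ∧ IsSmooth P q := by
  constructor
  · intro h
    refine ⟨h.trans (smoothPart_dvd P d), ?_⟩
    intro p pp hpq
    have hsp : p ∣ smoothPart P d := hpq.trans h
    rw [smoothPart, Prime.dvd_finset_prod_iff pp.prime] at hsp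
    obtain ⟨r, hr, hpr⟩ := hsp
    have hrp : r.Prime := Nat.prime_of_mem_primeFactors (Finset.mem_filter.mp hr).1
    have : p = r := by
      have := pp.dvd_of_dvd_pow hpr
      exact (Nat.prime_dvd_prime_iff_eq pp hrp).mp this
    exact this ▸ (Finset.mem_filter.mp hr).2
  · intro ⟨hqd, hsm⟩
    rw [← Nat.factorization_le_iff_dvd hq (smoothPart_pos P d).ne']
    intro p
    rcases Nat.eq_zero_or_pos (q.factorization p) with h0 | hpos
    · simp [h0]
    · have hpq : p ∈ q.primeFactors := by
        rw [← Nat.support_factorization]; exact Finsupp.mem_support_iff.mpr hpos.ne'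
      have pp : Nat.Prime p := Nat.prime_of_mem_primeFactors hpq
      have hpd : p ∣ d := (Nat.dvd_of_mem_primeFactors hpq).trans hqd
      have hpP : p ≤ P := hsm p pp (Nat.dvd_of_mem_primeFactors hpq)
      have hmem : p ∈ d.primeFactors.filter (· ≤ P) :=
        Finset.mem_filter.mpr ⟨Nat.mem_primeFactors.mpr ⟨pp, hpd, hd⟩, hpP⟩
      rw [smoothPart_factorization P d p hd hmem]
      exact ((Nat.factorization_le_iff_dvd hq hd).mpr hqd) p

lemma smoothPart_eq_self {P d : ℕ} (hd : d ≠ 0) (hsm : IsSmooth P d) :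
    smoothPart P d = d := by
  rw [smoothPart, Finset.filter_true_of_mem, ← Nat.support_factorization]
  · exact Nat.factorization_prod_pow_eq_self hd
  · intro p hp
    exact hsm p (Nat.prime_of_mem_primeFactors hp) (Nat.dvd_of_mem_primeFactors hp)

/-- Möbius inversion: `F a = ∑_{d | a} F'(d)`. -/
lemma sum_eratosthenes (F : ℕ → ℂ) {a : ℕ} (ha : a ≠ 0) :
    ∑ e ∈ a.divisors, eratosthenes F e = F a := by
  set G : ArithmeticFunction ℂ := ⟨fun n => if n = 0 then 0 else F n, if_pos rfl⟩ with hG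
  have herat : ∀ d, eratosthenes F d
      = (G * (ArithmeticFunction.moebius : ArithmeticFunction ℤ)) d := by
    intro d
    rw [ArithmeticFunction.mul_apply,
      Nat.sum_divisorsAntidiagonal (fun i j => G i * ((ArithmeticFunction.moebius : ArithmeticFunction ℤ) : ArithmeticFunction ℂ) j)]
    apply Finset.sum_congr rfl
    intro e he
    have he0 : e ≠ 0 := (Nat.pos_of_mem_divisors he).ne'
    rw [hG]
    simp only [ArithmeticFunction.coe_mk, if_neg he0, ArithmeticFunction.intCoe_apply]
    ring
  have h1 : ∑ e ∈ a.divisors, eratosthenes F e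
      = ((G * (ArithmeticFunction.moebius : ArithmeticFunction ℤ)) * ArithmeticFunction.zeta) a := by
    rw [ArithmeticFunction.coe_mul_zeta_apply]
    exact Finset.sum_congr rfl fun e _ => herat e
  rw [h1, mul_assoc, ArithmeticFunction.coe_moebius_mul_coe_zeta, mul_one]
  simp [hG, ha]

end WintnerAux

/-- (Wintner's Dream Theorem.) If `F` satisfies the Wintner Assumption
`∑_d |F'(d)|/d < ∞`, then for every `a ≥ 1` the `P`-smooth partial sums of the
Ramanujan expansion with Wintner coefficients converge to `F(a)` as
`P → ∞` through the primes. -/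
theorem stmt5 (F : ℕ → ℂ)
    (hWA : Summable (fun d : ℕ => ‖eratosthenes F d‖ / d))
    (a : ℕ) (ha : 0 < a) :
    Tendsto
      (fun P : ℕ =>
        ∑' q : ℕ, if 0 < q ∧ IsSmooth P q then winCoeff F q * (ramanujanSum q a : ℂ) else 0)
      (atTop ⊓ Filter.principal {P : ℕ | P.Prime}) (nhds (F a)) := by
  classical
  apply Tendsto.mono_left _ inf_le_left
  set c : ℕ → ℝ := fun d => ‖eratosthenes F d‖ / d with hc
  have hc0 : ∀ d, 0 ≤ c d := fun d => div_nonneg (norm_nonneg _) (Nat.cast_nonneg d)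
  set v : ℕ → ℕ → ℂ := fun P d =>
    if 0 < d ∧ WintnerAux.smoothPart P d ∣ a
    then eratosthenes F d / d * (WintnerAux.smoothPart P d : ℂ) else 0 with hv
  -- Step 1: the partial sum equals `∑' d, v P d`.
  have step1 : ∀ P : ℕ,
      (∑' q : ℕ, if 0 < q ∧ IsSmooth P q then winCoeff F q * (ramanujanSum q a : ℂ) else 0)
      = ∑' d, v P d := by
    intro P
    have hap : a * primorial P ≠ 0 := Nat.mul_ne_zero ha.ne' (primorial_pos P).ne'
    set Q := (a * primorial P).divisors with hQ
    set u : ℕ → ℕ → ℂ := fun q d =>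
      if 0 < q ∧ IsSmooth P q ∧ q ∣ d
      then eratosthenes F d / d * ((ramanujanSum q a : ℤ) : ℂ) else 0 with hu
    have hnormterm : ∀ d, ‖eratosthenes F d / (d : ℂ)‖ = c d := by
      intro d
      rw [norm_div, Complex.norm_natCast, hc]
    have husum : ∀ q, Summable (u q) := by
      intro q
      apply Summable.of_norm_bounded (hWA.mul_right ‖((ramanujanSum q a : ℤ) : ℂ)‖)
      intro d
      rw [hu]; dsimp only
      split
      · rw [norm_mul, hnormterm]
      · rw [norm_zero]
        exact mul_nonneg (hc0 d) (norm_nonneg _)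
    have hsupp : ∀ q ∉ Q,
        (if 0 < q ∧ IsSmooth P q then winCoeff F q * (ramanujanSum q a : ℂ) else 0) = 0 := by
      intro q hq
      split
      case isTrue h =>
        have hram : ramanujanSum q a = 0 := by
          apply WintnerAux.ramanujan_eq_zero' ha.ne' h.1.ne' h.2
          intro hdvd
          exact hq (Nat.mem_divisors.mpr ⟨hdvd, hap⟩)
        rw [hram]; simp
      case isFalse => rfl
    have hterm : ∀ q,
        (if 0 < q ∧ IsSmooth P q then winCoeff F q * (ramanujanSum q a : ℂ) else 0)
        = ∑' d, u q d := by
      intro q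
      by_cases h : 0 < q ∧ IsSmooth P q
      · rw [if_pos h, winCoeff, ← tsum_mul_right]
        apply tsum_congr; intro d
        rw [hu]; dsimp only
        by_cases hd : q ∣ d
        · rw [if_pos hd, if_pos ⟨h.1, h.2, hd⟩]
        · rw [if_neg hd, if_neg (by tauto), zero_mul]
      · rw [if_neg h]
        symm
        calc ∑' d, u q d = ∑' _ : ℕ, (0 : ℂ) :=
              tsum_congr (fun d => by rw [hu]; dsimp only; rw [if_neg (by tauto)])
          _ = 0 := tsum_zero
    have inner : ∀ d, ∑ q ∈ Q, u q d = v P d := by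
      intro d
      rcases Nat.eq_zero_or_pos d with rfl | hd
      · rw [hv]; dsimp only
        rw [if_neg (by simp)]
        apply Finset.sum_eq_zero; intro q _
        rw [hu]; dsimp only
        split
        · rw [WintnerAux.erat_zero]; simp
        · rfl
      · set m := WintnerAux.smoothPart P d with hm
        have hm0 : m ≠ 0 := (WintnerAux.smoothPart_pos P d).ne'
        have hA : ∑ q ∈ Q, u q d
            = ∑ q ∈ Q.filter (fun q => 0 < q ∧ IsSmooth P q ∧ q ∣ d),
              (eratosthenes F d / d * ((ramanujanSum q a : ℤ) : ℂ)) :=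
          (Finset.sum_filter _ _).symm
        have hsub : Q.filter (fun q => 0 < q ∧ IsSmooth P q ∧ q ∣ d) ⊆ m.divisors := by
          intro q hq
          obtain ⟨_, hq1, hq2, hq3⟩ := Finset.mem_filter.mp hq
          exact Nat.mem_divisors.mpr
            ⟨(WintnerAux.dvd_smoothPart_iff hd.ne' hq1.ne').mpr ⟨hq3, hq2⟩, hm0⟩
        have hC : ∑ q ∈ Q.filter (fun q => 0 < q ∧ IsSmooth P q ∧ q ∣ d),
              (eratosthenes F d / d * ((ramanujanSum q a : ℤ) : ℂ))
            = ∑ q ∈ m.divisors, (eratosthenes F d / d * ((ramanujanSum q a : ℤ) : ℂ)) := by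
          apply Finset.sum_subset hsub
          intro q hqm hqn
          have hq0 : q ≠ 0 := (Nat.pos_of_mem_divisors hqm).ne'
          have hqd := (WintnerAux.dvd_smoothPart_iff hd.ne' hq0).mp (Nat.mem_divisors.mp hqm).1
          have hqQ : q ∉ Q := by
            intro hqQ
            exact hqn (Finset.mem_filter.mpr ⟨hqQ, Nat.pos_of_ne_zero hq0, hqd.2, hqd.1⟩)
          have hram : ramanujanSum q a = 0 := by
            apply WintnerAux.ramanujan_eq_zero' ha.ne' hq0 hqd.2
            intro hdvd
            exact hqQ (Nat.mem_divisors.mpr ⟨hdvd, hap⟩)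
          rw [hram]; simp
        have hD : ∑ q ∈ m.divisors, (eratosthenes F d / d * ((ramanujanSum q a : ℤ) : ℂ))
            = v P d := by
          rw [← Finset.mul_sum]
          have : (∑ q ∈ m.divisors, ((ramanujanSum q a : ℤ) : ℂ))
              = ((∑ q ∈ m.divisors, ramanujanSum q a : ℤ) : ℂ) := by push_cast; ring
          rw [this, WintnerAux.sum_ramanujan a m, hv]
          dsimp only
          by_cases hma : m ∣ a
          · rw [if_pos hma, if_pos ⟨hd, hma⟩]
            push_cast
            ring
          · rw [if_neg hma, if_neg (by tauto), Int.cast_zero, mul_zero]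
        rw [hA, hC, hD]
    calc (∑' q : ℕ, if 0 < q ∧ IsSmooth P q then winCoeff F q * (ramanujanSum q a : ℂ) else 0)
        = ∑ q ∈ Q, (if 0 < q ∧ IsSmooth P q then winCoeff F q * (ramanujanSum q a : ℂ) else 0) :=
          tsum_eq_sum hsupp
      _ = ∑ q ∈ Q, ∑' d, u q d := Finset.sum_congr rfl (fun q _ => hterm q)
      _ = ∑' d, ∑ q ∈ Q, u q d := (Summable.tsum_finsetSum (fun q _ => husum q)).symm
      _ = ∑' d, v P d := tsum_congr inner
  -- Step 2: the limit.
  set w : ℕ → ℂ := fun d => if d ∈ a.divisors then eratosthenes F d else 0 with hw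
  have hwzero : ∀ d ∉ a.divisors, w d = 0 := fun d hd => if_neg hd
  have hwsum : Summable w := summable_of_ne_finset_zero hwzero
  have hwt : ∑' d, w d = F a := by
    rw [tsum_eq_sum hwzero, ← WintnerAux.sum_eratosthenes F ha.ne']
    exact Finset.sum_congr rfl (fun d hd => if_pos hd)
  have hvnorm : ∀ P d, ‖v P d‖ ≤ (a : ℝ) * c d := by
    intro P d
    rw [hv]; dsimp only
    split
    case isTrue h =>
      rw [norm_mul, norm_div, Complex.norm_natCast, Complex.norm_natCast]
      have h1 : (WintnerAux.smoothPart P d : ℝ) ≤ (a : ℝ) := by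
        exact_mod_cast Nat.le_of_dvd ha h.2
      calc ‖eratosthenes F d‖ / d * (WintnerAux.smoothPart P d : ℝ)
          ≤ ‖eratosthenes F d‖ / d * (a : ℝ) := by
            apply mul_le_mul_of_nonneg_left h1 (hc0 d)
        _ = (a : ℝ) * c d := mul_comm _ _
    case isFalse =>
      rw [norm_zero]
      exact mul_nonneg (Nat.cast_nonneg a) (hc0 d)
  have hvsum : ∀ P, Summable (v P) :=
    fun P => Summable.of_norm_bounded (hWA.mul_left _) (hvnorm P)
  have hbound : ∀ P, a ≤ P → ∀ d, ‖v P d - w d‖ ≤ (a : ℝ) * (if P < d then c d else 0) := by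
    intro P hP d
    rcases Nat.eq_zero_or_pos d with rfl | hd
    · have h1 : v P 0 = 0 := by rw [hv]; dsimp only; rw [if_neg (by simp)]
      have h2 : w 0 = 0 := by
        apply hwzero; simp [Nat.mem_divisors]
      rw [h1, h2, sub_zero, norm_zero]
      split
      · exact mul_nonneg (Nat.cast_nonneg a) (hc0 0)
      · simp
    by_cases hsm : IsSmooth P d
    · have hmd : WintnerAux.smoothPart P d = d := WintnerAux.smoothPart_eq_self hd.ne' hsm
      have hvw : v P d = w d := by
        rw [hv, hw]; dsimp only; rw [hmd]
        by_cases hda : d ∣ a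
        · rw [if_pos ⟨hd, hda⟩, if_pos (Nat.mem_divisors.mpr ⟨hda, ha.ne'⟩)]
          rw [div_mul_cancel₀]
          exact_mod_cast hd.ne'
        · rw [if_neg (by tauto), if_neg (fun hmem => hda (Nat.mem_divisors.mp hmem).1)]
      rw [hvw, sub_self, norm_zero]
      split
      · exact mul_nonneg (Nat.cast_nonneg a) (hc0 d)
      · simp
    · obtain ⟨p, pp, pd, pgt⟩ : ∃ p, p.Prime ∧ p ∣ d ∧ P < p := by
        by_contra hcon
        push_neg at hcon
        exact hsm (fun p hp hpd => hcon p hp hpd)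
      have hPd : P < d := lt_of_lt_of_le pgt (Nat.le_of_dvd hd pd)
      have hw0 : w d = 0 := by
        apply hwzero
        intro hmem
        have : d ≤ a := Nat.le_of_dvd ha (Nat.mem_divisors.mp hmem).1
        omega
      rw [hw0, sub_zero, if_pos hPd]
      exact hvnorm P d
  have htsum : ∀ P, Summable (fun d => if P < d then c d else 0) := by
    intro P
    apply Summable.of_nonneg_of_le (fun d => by split <;> [exact hc0 d; exact le_rfl])
      (fun d => by split <;> [exact le_rfl; exact hc0 d]) hWA
  have htail : Tendsto (fun P : ℕ => (a : ℝ) * ∑' d, (if P < d then c d else 0)) atTop (nhds 0) := by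
    have h1 : ∀ P : ℕ, (∑' d, (if P < d then c d else 0)) = ∑' k, c (k + (P + 1)) := by
      intro P
      have heq := Summable.sum_add_tsum_nat_add (f := fun d => if P < d then c d else 0) (P + 1) (htsum P)
      have hz : ∑ i ∈ Finset.range (P + 1), (if P < i then c i else 0) = 0 :=
        Finset.sum_eq_zero (fun i hi => if_neg (by simp only [Finset.mem_range] at hi; omega))
      rw [hz, zero_add] at heq
      rw [← heq]
      apply tsum_congr
      intro k
      exact if_pos (by omega)
    have h2 : Tendsto (fun P : ℕ => ∑' k, c (k + (P + 1))) atTop (nhds 0) :=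
      (tendsto_sum_nat_add c).comp (tendsto_add_atTop_nat 1)
    have h3 : Tendsto (fun P : ℕ => ∑' d, (if P < d then c d else 0)) atTop (nhds 0) := by
      simpa [h1] using h2
    simpa using h3.const_mul (a : ℝ)
  rw [tendsto_iff_norm_sub_tendsto_zero]
  refine squeeze_zero' (Eventually.of_forall (fun P => norm_nonneg _)) ?_ htail
  filter_upwards [eventually_ge_atTop a] with P hP
  rw [step1 P, ← hwt, ← Summable.tsum_sub (hvsum P) hwsum]
  have hnormsum : Summable (fun d => ‖v P d - w d‖) :=
    summable_norm_iff.mpr ((hvsum P).sub hwsum)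
  calc ‖∑' d, (v P d - w d)‖ ≤ ∑' d, ‖v P d - w d‖ := norm_tsum_le_tsum_norm hnormsum
    _ ≤ ∑' d, (a : ℝ) * (if P < d then c d else 0) :=
        Summable.tsum_le_tsum (hbound P hP) hnormsum ((htsum P).mul_left _)
    _ = (a : ℝ) * ∑' d, (if P < d then c d else 0) := tsum_mul_left
end

section
/- (Wintner orthogonal decomposition for F') Let F: ℕ → ℂ have all Wintner coefficients Win_q F = ∑_{d ≡ 0 mod q} F'(d)/d (each series convergent). Then for every d ∈ ℕ and every prime P, F'(d) = d · ∑_{K P-smooth} μ(K) · Win_{dK} F − ∑_{r P-sifted, r > 1} F'(dr)/r, where the last series converges (as the limit of its partial sums up to x). -/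
open scoped BigOperators Classical
open Filter

/-- `n` is `P`-sifted: every prime factor of `n` exceeds `P`. -/
def IsSifted (P n : ℕ) : Prop := ∀ p : ℕ, p.Prime → p ∣ n → P < p

private lemma sum_moebius_divisors (r : ℕ) :
    ∑ k ∈ r.divisors, (ArithmeticFunction.moebius k : ℂ) = if r = 1 then 1 else 0 := by
  have h := congrArg (fun f : ArithmeticFunction ℤ => f r)
    ArithmeticFunction.moebius_mul_coe_zeta
  simp only [ArithmeticFunction.coe_mul_zeta_apply, ArithmeticFunction.one_apply] at h
  calc ∑ k ∈ r.divisors, (ArithmeticFunction.moebius k : ℂ)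
      = ((∑ k ∈ r.divisors, ArithmeticFunction.moebius k : ℤ) : ℂ) := by push_cast; rfl
    _ = _ := by rw [h]; split <;> simp

/-- (Wintner orthogonal decomposition for `F'`.) If all Wintner coefficients
`W q = ∑_{d ≡ 0 mod q} F'(d)/d` exist (as limits of partial sums), then for every
`d ≥ 1` and every prime `P`, the irregular series `∑_{r P-sifted, r>1} F'(dr)/r`
converges, to a limit `L` with `F'(d) = d ∑_{K P-smooth} μ(K) W(dK) − L`. -/
theorem stmt7 (F : ℕ → ℂ) (W : ℕ → ℂ)
    (hW : ∀ q : ℕ, 0 < q →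
      Tendsto (fun x : ℕ => ∑ d ∈ Finset.Icc 1 x, if q ∣ d then eratosthenes F d / d else 0)
        atTop (nhds (W q)))
    (d : ℕ) (hd : 0 < d) (P : ℕ) (hP : P.Prime) :
    ∃ L : ℂ,
      Tendsto
        (fun x : ℕ =>
          ∑ r ∈ Finset.Icc 2 x, if IsSifted P r then eratosthenes F (d * r) / r else 0)
        atTop (nhds L) ∧
      eratosthenes F d =
        (d : ℂ) * (∑' K : {K : ℕ // 0 < K ∧ IsSmooth P K},
            (ArithmeticFunction.moebius (K : ℕ) : ℂ) * W (d * K)) - L := by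
  classical
  set F' := eratosthenes F with hF'def
  set N := ∏ p ∈ Nat.primesBelow (P + 1), p with hNdef
  have hNpos : 0 < N :=
    Finset.prod_pos fun p hp => (Nat.prime_of_mem_primesBelow hp).pos
  -- every divisor of N is positive and smooth
  have hdivmem : ∀ K ∈ N.divisors, 0 < K ∧ IsSmooth P K := by
    intro K hK
    rw [Nat.mem_divisors] at hK
    refine ⟨Nat.pos_of_dvd_of_pos hK.1 hNpos, ?_⟩
    intro p pp hpK
    have hpN : p ∣ N := hpK.trans hK.1
    obtain ⟨q, hq, hpq⟩ := (Prime.dvd_finset_prod_iff pp.prime _).mp hpN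
    have hqp : q.Prime := Nat.prime_of_mem_primesBelow hq
    have hlt : q < P + 1 := Nat.lt_of_mem_primesBelow hq
    have : p = q := (Nat.prime_dvd_prime_iff_eq pp hqp).mp hpq
    omega
  -- positive smooth squarefree numbers divide N
  have hsmooth_dvd : ∀ K : ℕ, 0 < K → IsSmooth P K → Squarefree K → K ∣ N := by
    intro K hK0 hKs hKsf
    have hKeq : ∏ p ∈ K.primeFactors, p = K := Nat.prod_primeFactors_of_squarefree hKsf
    rw [← hKeq, hNdef]
    refine Finset.prod_dvd_prod_of_subset _ _ _ ?_
    intro p hp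
    have pp : p.Prime := Nat.prime_of_mem_primeFactors hp
    have hdvd : p ∣ K := Nat.dvd_of_mem_primeFactors hp
    exact Nat.mem_primesBelow.mpr ⟨Nat.lt_succ_of_le (hKs p pp hdvd), pp⟩
  -- the tsum is a finite sum over divisors of N
  set T : ℂ := ∑ K ∈ N.divisors, (ArithmeticFunction.moebius K : ℂ) * W (d * K) with hTdef
  have htsum : (∑' K : {K : ℕ // 0 < K ∧ IsSmooth P K},
      (ArithmeticFunction.moebius (K : ℕ) : ℂ) * W (d * K)) = T := by
    have h1 := tsum_subtype {K : ℕ | 0 < K ∧ IsSmooth P K}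
        (fun K => (ArithmeticFunction.moebius K : ℂ) * W (d * K))
    refine Eq.trans h1 ?_
    rw [tsum_eq_sum (s := N.divisors) ?_]
    · refine Finset.sum_congr rfl fun K hK => ?_
      exact Set.indicator_of_mem
        (show K ∈ {n : ℕ | 0 < n ∧ IsSmooth P n} from hdivmem K hK)
        (fun n : ℕ => (ArithmeticFunction.moebius n : ℂ) * W (d * n))
    · intro K hK
      by_cases hmem : K ∈ {K : ℕ | 0 < K ∧ IsSmooth P K}
      · rw [Set.indicator_of_mem hmem]
        by_cases hsf : Squarefree K
        · exact absurd (Nat.mem_divisors.mpr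
            ⟨hsmooth_dvd K hmem.1 hmem.2 hsf, hNpos.ne'⟩) hK
        · simp [ArithmeticFunction.moebius_eq_zero_of_not_squarefree hsf]
      · exact Set.indicator_of_notMem hmem _
  -- the finite combination of Wintner limits
  have hA : Tendsto (fun x : ℕ => ∑ K ∈ N.divisors, (ArithmeticFunction.moebius K : ℂ) *
      (∑ m ∈ Finset.Icc 1 x, if d * K ∣ m then F' m / m else 0)) atTop (nhds T) := by
    rw [hTdef]
    refine tendsto_finset_sum _ fun K hK => ?_
    exact (hW (d * K) (Nat.mul_pos hd (hdivmem K hK).1)).const_mul _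
  -- sifted characterization via gcd
  have hsift : ∀ r : ℕ, 0 < r → (Nat.gcd N r = 1 ↔ IsSifted P r) := by
    intro r hr
    constructor
    · intro h p pp hpr
      by_contra hle
      push_neg at hle
      have hpN : p ∣ N := by
        rw [hNdef]
        exact Finset.dvd_prod_of_mem _ (Nat.mem_primesBelow.mpr ⟨Nat.lt_succ_of_le hle, pp⟩)
      have : p ∣ Nat.gcd N r := Nat.dvd_gcd hpN hpr
      rw [h] at this
      exact pp.one_lt.ne' (Nat.eq_one_of_dvd_one this)
    · intro h
      by_contra hne
      have hg : 1 < Nat.gcd N r := by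
        have : 0 < Nat.gcd N r := Nat.gcd_pos_of_pos_left r hNpos
        omega
      set p := (Nat.gcd N r).minFac with hp
      have pp : p.Prime := Nat.minFac_prime (by omega)
      have hpg : p ∣ Nat.gcd N r := Nat.minFac_dvd _
      have hpr : p ∣ r := hpg.trans (Nat.gcd_dvd_right _ _)
      have hpN : p ∣ N := hpg.trans (Nat.gcd_dvd_left _ _)
      obtain ⟨q, hq, hpq⟩ := (Prime.dvd_finset_prod_iff pp.prime _).mp hpN
      have hqp : q.Prime := Nat.prime_of_mem_primesBelow hq
      have hlt : q < P + 1 := Nat.lt_of_mem_primesBelow hq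
      have : p = q := (Nat.prime_dvd_prime_iff_eq pp hqp).mp hpq
      have := h p pp hpr
      omega
  -- the Möbius sifting identity, per term
  have hinner : ∀ m : ℕ, 0 < m →
      (∑ K ∈ N.divisors, (ArithmeticFunction.moebius K : ℂ) *
        (if d * K ∣ m then F' m / m else 0))
      = if d ∣ m ∧ IsSifted P (m / d) then F' m / m else 0 := by
    intro m hm
    by_cases hdm : d ∣ m
    · obtain ⟨r, rfl⟩ := hdm
      have hr : 0 < r := by
        rcases Nat.eq_zero_or_pos r with rfl | h
        · simp at hm
        · exact h
      have hrd : d * r / d = r := Nat.mul_div_cancel_left r hd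
      have key : ∀ K : ℕ, (d * K ∣ d * r) ↔ K ∣ r := fun K =>
        mul_dvd_mul_iff_left hd.ne'
      calc ∑ K ∈ N.divisors, (ArithmeticFunction.moebius K : ℂ) *
            (if d * K ∣ d * r then F' (d * r) / ((d * r : ℕ) : ℂ) else 0)
          = ∑ K ∈ N.divisors, (if K ∣ r then
              (ArithmeticFunction.moebius K : ℂ) * (F' (d * r) / ((d * r : ℕ) : ℂ)) else 0) := by
            refine Finset.sum_congr rfl fun K _ => ?_
            rw [mul_ite, mul_zero]
            congr 1
            simp [key K]
        _ = ∑ K ∈ N.divisors.filter (· ∣ r), (ArithmeticFunction.moebius K : ℂ) *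
              (F' (d * r) / ((d * r : ℕ) : ℂ)) := (Finset.sum_filter _ _).symm
        _ = ∑ K ∈ (Nat.gcd N r).divisors, (ArithmeticFunction.moebius K : ℂ) *
              (F' (d * r) / ((d * r : ℕ) : ℂ)) := by
            congr 1
            ext k
            simp only [Finset.mem_filter, Nat.mem_divisors, Nat.dvd_gcd_iff]
            constructor
            · rintro ⟨⟨h1, _⟩, h2⟩; exact ⟨⟨h1, h2⟩, (Nat.gcd_pos_of_pos_left r hNpos).ne'⟩
            · rintro ⟨⟨h1, h2⟩, _⟩; exact ⟨⟨h1, hNpos.ne'⟩, h2⟩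
        _ = (if Nat.gcd N r = 1 then 1 else 0) * (F' (d * r) / ((d * r : ℕ) : ℂ)) := by
            rw [← Finset.sum_mul, sum_moebius_divisors]
        _ = if d ∣ d * r ∧ IsSifted P (d * r / d) then F' (d * r) / ((d * r : ℕ) : ℂ) else 0 := by
            rw [hrd]
            by_cases hg : Nat.gcd N r = 1
            · simp [hg, (hsift r hr).mp hg, Dvd.intro r rfl]
            · have : ¬ IsSifted P r := fun hs => hg ((hsift r hr).mpr hs)
              simp [hg, this]
    · have hz : ∀ K ∈ N.divisors, (ArithmeticFunction.moebius K : ℂ) *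
          (if d * K ∣ m then F' m / m else 0) = 0 := by
        intro K _
        have : ¬ d * K ∣ m := fun h => hdm ((dvd_mul_right d K).trans h)
        simp [this]
      rw [Finset.sum_congr rfl hz, Finset.sum_const_zero]
      simp [hdm]
  -- rewrite A as a single sum
  have hAeq : ∀ x : ℕ, (∑ K ∈ N.divisors, (ArithmeticFunction.moebius K : ℂ) *
      (∑ m ∈ Finset.Icc 1 x, if d * K ∣ m then F' m / m else 0))
      = ∑ m ∈ Finset.Icc 1 x, (if d ∣ m ∧ IsSifted P (m / d) then F' m / m else 0) := by
    intro x
    calc (∑ K ∈ N.divisors, (ArithmeticFunction.moebius K : ℂ) *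
          (∑ m ∈ Finset.Icc 1 x, if d * K ∣ m then F' m / m else 0))
        = ∑ K ∈ N.divisors, ∑ m ∈ Finset.Icc 1 x,
            (ArithmeticFunction.moebius K : ℂ) * (if d * K ∣ m then F' m / m else 0) :=
          Finset.sum_congr rfl fun K _ => Finset.mul_sum _ _ _
      _ = ∑ m ∈ Finset.Icc 1 x, ∑ K ∈ N.divisors,
            (ArithmeticFunction.moebius K : ℂ) * (if d * K ∣ m then F' m / m else 0) :=
          Finset.sum_comm
      _ = ∑ m ∈ Finset.Icc 1 x, (if d ∣ m ∧ IsSifted P (m / d) then F' m / m else 0) :=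
          Finset.sum_congr rfl fun m hm => hinner m (by
            have := (Finset.mem_Icc.mp hm).1; omega)
  -- reindex the single sum along multiples of d
  have himg : ∀ y : ℕ, (Finset.Icc 1 (d * y)).filter (d ∣ ·) =
      (Finset.Icc 1 y).image (fun r => d * r) := by
    intro y
    ext m
    simp only [Finset.mem_filter, Finset.mem_Icc, Finset.mem_image]
    constructor
    · rintro ⟨⟨h1, h2⟩, r, rfl⟩
      exact ⟨r, ⟨by nlinarith, Nat.le_of_mul_le_mul_left h2 hd⟩, rfl⟩
    · rintro ⟨r, ⟨h1, h2⟩, rfl⟩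
      exact ⟨⟨by nlinarith, Nat.mul_le_mul_left d h2⟩, Dvd.intro r rfl⟩
  have hBeq : ∀ y : ℕ,
      (∑ m ∈ Finset.Icc 1 (d * y), (if d ∣ m ∧ IsSifted P (m / d) then F' m / m else 0))
      = ∑ r ∈ Finset.Icc 1 y, (if IsSifted P r then F' (d * r) / (d * r) else 0) := by
    intro y
    have step1 : (∑ m ∈ Finset.Icc 1 (d * y),
        (if d ∣ m ∧ IsSifted P (m / d) then F' m / m else 0))
        = ∑ m ∈ (Finset.Icc 1 (d * y)).filter (d ∣ ·),
            (if IsSifted P (m / d) then F' m / m else 0) := by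
      rw [Finset.sum_filter]
      refine Finset.sum_congr rfl fun m _ => ?_
      by_cases h1 : d ∣ m <;> by_cases h2 : IsSifted P (m / d) <;> simp [h1, h2]
    rw [step1, himg y, Finset.sum_image (fun a _ b _ h => Nat.eq_of_mul_eq_mul_left hd h)]
    refine Finset.sum_congr rfl fun r _ => ?_
    rw [Nat.mul_div_cancel_left r hd, Nat.cast_mul]
  -- the partial sums over sifted r tend to T
  have hBlim : Tendsto (fun y : ℕ =>
      ∑ r ∈ Finset.Icc 1 y, (if IsSifted P r then F' (d * r) / (d * r) else 0))
      atTop (nhds T) := by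
    have hcomp : Tendsto (fun y : ℕ => d * y) atTop atTop :=
      Tendsto.const_mul_atTop' hd tendsto_id
    have := hA.comp hcomp
    refine this.congr fun y => ?_
    simp only [Function.comp]
    rw [hAeq (d * y), hBeq y]
  -- multiply by d
  have hClim : Tendsto (fun y : ℕ =>
      ∑ r ∈ Finset.Icc 1 y, (if IsSifted P r then F' (d * r) / r else 0))
      atTop (nhds ((d : ℂ) * T)) := by
    refine (hBlim.const_mul (d : ℂ)).congr fun y => ?_
    rw [Finset.mul_sum]
    refine Finset.sum_congr rfl fun r hr => ?_
    have hr1 : 1 ≤ r := (Finset.mem_Icc.mp hr).1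
    by_cases hs : IsSifted P r
    · simp only [hs, if_true]
      have hd0 : (d : ℂ) ≠ 0 := Nat.cast_ne_zero.mpr hd.ne'
      have hr0 : (r : ℂ) ≠ 0 := Nat.cast_ne_zero.mpr (by omega)
      field_simp
    · simp [hs]
  -- remove the r = 1 term
  refine ⟨(d : ℂ) * T - F' d, ?_, ?_⟩
  · have hsift1 : IsSifted P 1 := fun p pp hp =>
      absurd (Nat.eq_one_of_dvd_one hp) pp.one_lt.ne'
    have hev : ∀ᶠ x : ℕ in atTop,
        (∑ r ∈ Finset.Icc 1 x, (if IsSifted P r then F' (d * r) / r else 0)) - F' d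
        = ∑ r ∈ Finset.Icc 2 x, (if IsSifted P r then F' (d * r) / r else 0) := by
      filter_upwards [eventually_ge_atTop 1] with x hx
      have hins : Finset.Icc 1 x = insert 1 (Finset.Icc 2 x) := by
        ext m; simp only [Finset.mem_Icc, Finset.mem_insert]; omega
      rw [hins, Finset.sum_insert (by simp)]
      simp [hsift1, mul_one]
    exact ((hClim.sub_const (F' d)).congr' hev)
  · rw [htsum]
    ring
end

section
/- Let F: ℕ → ℂ satisfy the Wintner Assumption ∑_d |F'(d)|/d < ∞. Then for every fixed d ∈ ℕ, the irregular series tends to zero: lim_{P→∞, P prime} ∑_{r P-sifted, r > 1} F'(dr)/r = 0. -/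
open scoped BigOperators Classical
open Filter

/-- Under the Wintner Assumption `∑_d |F'(d)|/d < ∞`, for every fixed `d ≥ 1`
the irregular series tends to zero:
`lim_{P→∞ prime} ∑_{r P-sifted, r>1} F'(dr)/r = 0`. -/
theorem stmt10 (F : ℕ → ℂ)
    (hWA : Summable (fun d : ℕ => ‖eratosthenes F d‖ / d))
    (d : ℕ) (hd : 0 < d) :
    Tendsto
      (fun P : ℕ => ∑' r : ℕ, if 1 < r ∧ IsSifted P r then eratosthenes F (d * r) / r else 0)
      (atTop ⊓ Filter.principal {P : ℕ | P.Prime}) (nhds 0) := by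
  set g : ℕ → ℝ := fun n => ‖eratosthenes F n‖ / n with hg
  have hgs : Summable g := hWA
  set f : ℕ → ℝ := fun r => (d : ℝ) * g (d * r) with hf
  have hfs : Summable f := by
    have : Summable (fun r : ℕ => g (d * r)) :=
      hgs.comp_injective (fun a b hab => Nat.eq_of_mul_eq_mul_left hd hab)
    exact this.mul_left _
  have hgnn : ∀ n, 0 ≤ g n := fun n => div_nonneg (norm_nonneg _) (Nat.cast_nonneg _)
  have hfnn : ∀ n, 0 ≤ f n := fun n => mul_nonneg (Nat.cast_nonneg _) (hgnn _)
  set T : ℕ → ℝ := fun P => ∑' r : ℕ, if P < r then f r else 0 with hT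
  have hTsum : ∀ P : ℕ, Summable (fun r : ℕ => if P < r then f r else 0) := by
    intro P
    apply hfs.of_nonneg_of_le
    · intro r; split
      · exact hfnn r
      · exact le_refl 0
    · intro r; split
      · exact le_refl _
      · exact hfnn r
  -- termwise bound
  have hle : ∀ P r : ℕ,
      ‖(if 1 < r ∧ IsSifted P r then eratosthenes F (d * r) / r else 0 : ℂ)‖ ≤
        (if P < r then f r else 0) := by
    intro P r
    by_cases hc : 1 < r ∧ IsSifted P r
    · have hr1 : 1 < r := hc.1
      have hp : P < r := by
        have hpf : r.minFac.Prime := Nat.minFac_prime (by omega)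
        have h1 := hc.2 _ hpf (Nat.minFac_dvd r)
        have h2 := Nat.minFac_le (show 0 < r by omega)
        omega
      rw [if_pos hc, if_pos hp]
      have hr0 : (0 : ℝ) < r := by exact_mod_cast Nat.lt_of_lt_of_le Nat.zero_lt_one hr1.le
      have hd0 : (0 : ℝ) < d := by exact_mod_cast hd
      have : f r = ‖eratosthenes F (d * r)‖ / r := by
        simp only [hf, hg, Nat.cast_mul]
        field_simp
      rw [this, norm_div]
      simp [Complex.norm_natCast]
    · rw [if_neg hc]
      simp only [norm_zero]
      split
      · exact hfnn r
      · exact le_refl 0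
  have hbound : ∀ P : ℕ,
      ‖∑' r : ℕ, if 1 < r ∧ IsSifted P r then eratosthenes F (d * r) / r else 0‖ ≤ T P := by
    intro P
    calc ‖∑' r : ℕ, if 1 < r ∧ IsSifted P r then eratosthenes F (d * r) / r else 0‖
        ≤ ∑' r : ℕ, ‖(if 1 < r ∧ IsSifted P r then eratosthenes F (d * r) / r else 0 : ℂ)‖ := by
          apply norm_tsum_le_tsum_norm
          exact (hTsum P).of_nonneg_of_le (fun r => norm_nonneg _) (hle P)
      _ ≤ T P := by
          apply Summable.tsum_le_tsum (hle P) _ (hTsum P)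
          exact (hTsum P).of_nonneg_of_le (fun r => norm_nonneg _) (hle P)
  -- tail tends to zero
  have heq : ∀ P : ℕ, T P = ∑' i : ℕ, f (i + (P + 1)) := by
    intro P
    have hinj : Function.Injective (fun i : ℕ => i + (P + 1)) :=
      fun a b h => by simp only [] at h; omega
    have hsupp : Function.support (fun r : ℕ => if P < r then f r else 0) ⊆
        Set.range (fun i : ℕ => i + (P + 1)) := by
      intro r hr
      simp only [Function.mem_support, ne_eq, ite_eq_right_iff, not_forall] at hr
      obtain ⟨h1, _⟩ := hr
      exact ⟨r - (P + 1), by simp only []; omega⟩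
    have key := Function.Injective.tsum_eq hinj
      (f := fun r : ℕ => if P < r then f r else 0) hsupp
    have : T P = ∑' i : ℕ, if P < i + (P + 1) then f (i + (P + 1)) else 0 := key.symm
    rw [this]
    congr 1
    ext i
    rw [if_pos (by omega)]
  have htail : Tendsto T atTop (nhds 0) := by
    have h1 : Tendsto (fun P : ℕ => ∑' i : ℕ, f (i + (P + 1))) atTop (nhds 0) :=
      (tendsto_sum_nat_add f).comp (tendsto_add_atTop_nat 1)
    exact h1.congr fun P => (heq P).symm
  have hmain : Tendsto
      (fun P : ℕ => ∑' r : ℕ, if 1 < r ∧ IsSifted P r then eratosthenes F (d * r) / r else 0)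
      atTop (nhds 0) := by
    rw [tendsto_zero_iff_norm_tendsto_zero]
    exact squeeze_zero (fun P => norm_nonneg _) hbound htail
  exact hmain.mono_left inf_le_left
end

section
/- Let F: ℕ → ℂ have all P-smooth Wintner coefficients Win^{(P)}_q F = ∑_{d P-smooth, q | d} F'(d)/d for all primes P and all q. Then for every a ∈ ℕ and every prime P ≥ a, F(a) = ∑_{q P-smooth} (Win^{(P)}_q F) c_q(a), where the sum over q is finite. -/
open scoped BigOperators Classical
open Filter

open ArithmeticFunction ArithmeticFunction.Moebius in
/-- Möbius inversion for the Eratosthenes transform. -/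
lemma sum_erat (F : ℕ → ℂ) {a : ℕ} (ha : 0 < a) :
    ∑ d ∈ a.divisors, eratosthenes F d = F a := by
  have := (ArithmeticFunction.sum_eq_iff_sum_mul_moebius_eq
      (f := eratosthenes F) (g := F)).mpr ?_ a ha
  · exact this
  · intro n hn
    rw [Nat.sum_divisorsAntidiagonal' (f := fun x y => (μ x : ℂ) * F y)]
    rfl

/-- The arithmetic function `e ↦ e·[e ∣ a]`. -/
noncomputable def gA (a : ℕ) : ArithmeticFunction ℤ :=
  ⟨fun e => if e ≠ 0 ∧ e ∣ a then (e : ℤ) else 0, by simp⟩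

open ArithmeticFunction ArithmeticFunction.Moebius in
lemma ram_eq {a q : ℕ} (ha : 0 < a) (hq : 0 < q) :
    ramanujanSum q a = (gA a * (μ : ArithmeticFunction ℤ)) q := by
  rw [ArithmeticFunction.mul_apply,
    Nat.sum_divisorsAntidiagonal (f := fun x y => gA a x * (μ y : ℤ))]
  rw [ramanujanSum]
  rw [show (Nat.gcd a q).divisors = q.divisors.filter (· ∣ a) from ?_]
  · rw [Finset.sum_filter]
    refine Finset.sum_congr rfl fun e he => ?_
    have he0 : e ≠ 0 := (Nat.pos_of_mem_divisors he).ne'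
    by_cases h : e ∣ a <;> simp [gA, h, he0]
  · ext e
    simp only [Nat.mem_divisors, Finset.mem_filter, Nat.dvd_gcd_iff]
    constructor
    · rintro ⟨⟨h1, h2⟩, -⟩
      exact ⟨⟨h2, hq.ne'⟩, h1⟩
    · rintro ⟨⟨h2, -⟩, h1⟩
      exact ⟨⟨h1, h2⟩, Nat.gcd_ne_zero_left ha.ne'⟩

open ArithmeticFunction ArithmeticFunction.Moebius in
lemma sum_ram {a d : ℕ} (ha : 0 < a) (hd : 0 < d) :
    ∑ q ∈ d.divisors, (ramanujanSum q a) = if d ∣ a then (d : ℤ) else 0 := by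
  have : ∑ q ∈ d.divisors, (ramanujanSum q a)
      = ∑ q ∈ d.divisors, (gA a * (μ : ArithmeticFunction ℤ)) q :=
    Finset.sum_congr rfl fun q hq => ram_eq ha (Nat.pos_of_mem_divisors hq)
  rw [this, ← ArithmeticFunction.coe_mul_zeta_apply, mul_assoc,
    ArithmeticFunction.moebius_mul_coe_zeta, mul_one]
  simp [gA, hd.ne']

lemma ram_zero {a q p : ℕ} (ha : 0 < a) (hq : 0 < q) (hp : p.Prime)
    (h : a.factorization p + 2 ≤ q.factorization p) : ramanujanSum q a = 0 := by
  refine Finset.sum_eq_zero fun e he => ?_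
  obtain ⟨hdvd, hne⟩ := Nat.mem_divisors.mp he
  have hea : e ∣ a := hdvd.trans (Nat.gcd_dvd_left a q)
  have heq : e ∣ q := hdvd.trans (Nat.gcd_dvd_right a q)
  have he0 : e ≠ 0 := fun h0 => by simp [h0] at hea; omega
  have hqe0 : q / e ≠ 0 := Nat.div_ne_zero_iff_of_dvd heq |>.mpr ⟨hq.ne', he0⟩
  have h1 : e.factorization p ≤ a.factorization p :=
    (Nat.factorization_le_iff_dvd he0 ha.ne').mpr hea p
  have h2 : 2 ≤ (q / e).factorization p := by
    rw [Nat.factorization_div heq]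
    simp only [Finsupp.tsub_apply]
    omega
  have hsq : ¬ Squarefree (q / e) := by
    intro hs
    have hpp : p ^ 2 ∣ q / e := (hp.pow_dvd_iff_le_factorization hqe0).mpr h2
    rw [pow_two] at hpp
    exact hp.one_lt.ne' (Nat.isUnit_iff.mp (hs p hpp))
  rw [ArithmeticFunction.moebius_eq_zero_of_not_squarefree hsq, mul_zero]

lemma smooth_dvd {a q P : ℕ} (ha : 0 < a) (hq : 0 < q) (hs : IsSmooth P q)
    (hr : ramanujanSum q a ≠ 0) : q ∣ a * ∏ p ∈ (P + 1).primesBelow, p := by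
  rw [Nat.dvd_iff_prime_pow_dvd_dvd]
  intro p k hp hpk
  have hpp : p.Prime := hp
  rcases Nat.eq_zero_or_pos k with rfl | hk
  · simp
  have hpq : p ∣ q := dvd_trans (dvd_pow_self p hk.ne') hpk
  have hpP : p ≤ P := hs p hpp hpq
  have hk' : k ≤ q.factorization p := (hpp.pow_dvd_iff_le_factorization hq.ne').mp hpk
  have hbound : q.factorization p ≤ a.factorization p + 1 := by
    by_contra hcon
    exact hr (ram_zero ha hq hpp (by omega))
  have h1 : p ^ (a.factorization p) ∣ a := Nat.ordProj_dvd a p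
  have h2 : p ∣ ∏ p ∈ (P + 1).primesBelow, p :=
    Finset.dvd_prod_of_mem _ (Nat.mem_primesBelow.mpr ⟨by omega, hpp⟩)
  calc p ^ k ∣ p ^ (a.factorization p + 1) := pow_dvd_pow p (by omega)
    _ = p ^ (a.factorization p) * p := by ring
    _ ∣ a * ∏ p ∈ (P + 1).primesBelow, p := mul_dvd_mul h1 h2

lemma key_sum {a d P : ℕ} (ha : 0 < a) (hd : 0 < d) (hsd : IsSmooth P d) :
    ∑ q ∈ ((a * ∏ p ∈ (P + 1).primesBelow, p).divisors.filter
        (fun q => (0 < q ∧ IsSmooth P q) ∧ q ∣ d)), ramanujanSum q a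
      = if d ∣ a then (d : ℤ) else 0 := by
  have hN : a * ∏ p ∈ (P + 1).primesBelow, p ≠ 0 :=
    Nat.mul_ne_zero ha.ne'
      (Finset.prod_pos fun p hp => (Nat.prime_of_mem_primesBelow hp).pos).ne'
  rw [← sum_ram ha hd]
  refine Finset.sum_subset ?_ ?_
  · intro q hq
    obtain ⟨-, ⟨-, -⟩, hqd⟩ := Finset.mem_filter.mp hq
    exact Nat.mem_divisors.mpr ⟨hqd, hd.ne'⟩
  · intro q hq hq'
    obtain ⟨hqd, -⟩ := Nat.mem_divisors.mp hq
    have hq0 : 0 < q := Nat.pos_of_mem_divisors hq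
    have hqs : IsSmooth P q := fun p pp hpq => hsd p pp (hpq.trans hqd)
    by_contra hr
    exact hq' (Finset.mem_filter.mpr
      ⟨Nat.mem_divisors.mpr ⟨smooth_dvd ha hq0 hqs hr, hN⟩, ⟨hq0, hqs⟩, hqd⟩)

/-- If all `P`-smooth Wintner coefficients
`Wp P q = ∑_{d P-smooth, q | d} F'(d)/d` exist, then for every `a ≥ 1` and
every prime `P ≥ a`, `F(a) = ∑_{q P-smooth} (Win^{(P)}_q F) c_q(a)`, and this
sum over `q` has finite support. -/
theorem stmt11 (F : ℕ → ℂ) (Wp : ℕ → ℕ → ℂ)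
    (hWp : ∀ P : ℕ, P.Prime → ∀ q : ℕ, 0 < q →
      Tendsto
        (fun x : ℕ =>
          ∑ d ∈ Finset.Icc 1 x, if IsSmooth P d ∧ q ∣ d then eratosthenes F d / d else 0)
        atTop (nhds (Wp P q)))
    (a : ℕ) (ha : 0 < a) (P : ℕ) (hP : P.Prime) (haP : a ≤ P) :
    {q : ℕ | (if 0 < q ∧ IsSmooth P q then Wp P q * (ramanujanSum q a : ℂ) else 0) ≠ 0}.Finite ∧
      F a = ∑' q : ℕ, if 0 < q ∧ IsSmooth P q then Wp P q * (ramanujanSum q a : ℂ) else 0 := by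
  classical
  set N : ℕ := a * ∏ p ∈ (P + 1).primesBelow, p with hNdef
  have hN : N ≠ 0 :=
    Nat.mul_ne_zero ha.ne'
      (Finset.prod_pos fun p hp => (Nat.prime_of_mem_primesBelow hp).pos).ne'
  set S : Finset ℕ := N.divisors with hSdef
  have hsupp : ∀ q : ℕ, q ∉ S →
      (if 0 < q ∧ IsSmooth P q then Wp P q * (ramanujanSum q a : ℂ) else 0) = 0 := by
    intro q hq
    by_cases hc : 0 < q ∧ IsSmooth P q
    · rw [if_pos hc]
      by_cases hr : ramanujanSum q a = 0
      · simp [hr]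
      · exact absurd (Nat.mem_divisors.mpr ⟨smooth_dvd ha hc.1 hc.2 hr, hN⟩) hq
    · rw [if_neg hc]
  refine ⟨Set.Finite.subset S.finite_toSet fun q hq => ?_, ?_⟩
  · by_contra h
    exact hq (hsupp q h)
  rw [tsum_eq_sum hsupp]
  set f : ℕ → ℂ := fun x : ℕ => ∑ q ∈ S,
    (if 0 < q ∧ IsSmooth P q then
      (∑ d ∈ Finset.Icc 1 x, if IsSmooth P d ∧ q ∣ d then eratosthenes F d / d else 0)
        * (ramanujanSum q a : ℂ) else 0) with hfdef
  have hlim : Tendsto f atTop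
      (nhds (∑ q ∈ S, (if 0 < q ∧ IsSmooth P q then Wp P q * (ramanujanSum q a : ℂ) else 0))) := by
    refine tendsto_finset_sum _ fun q _ => ?_
    by_cases hc : 0 < q ∧ IsSmooth P q
    · simp only [if_pos hc]
      exact (hWp P hP q hc.1).mul_const _
    · simp only [if_neg hc]
      exact tendsto_const_nhds
  have hconst : ∀ x : ℕ, a ≤ x → f x = F a := by
    intro x hx
    have step1 : f x = ∑ q ∈ S, ∑ d ∈ Finset.Icc 1 x,
        (if (0 < q ∧ IsSmooth P q) ∧ (IsSmooth P d ∧ q ∣ d) then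
          eratosthenes F d / d * (ramanujanSum q a : ℂ) else 0) := by
      refine Finset.sum_congr rfl fun q _ => ?_
      by_cases hc : 0 < q ∧ IsSmooth P q
      · rw [if_pos hc, Finset.sum_mul]
        refine Finset.sum_congr rfl fun d _ => ?_
        by_cases hd : IsSmooth P d ∧ q ∣ d <;> simp [hc, hd]
      · rw [if_neg hc]
        exact (Finset.sum_eq_zero fun d _ => by simp [hc]).symm
    rw [step1, Finset.sum_comm]
    have step3 : ∀ d ∈ Finset.Icc 1 x,
        (∑ q ∈ S, if (0 < q ∧ IsSmooth P q) ∧ (IsSmooth P d ∧ q ∣ d) then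
          eratosthenes F d / d * (ramanujanSum q a : ℂ) else 0)
        = if d ∣ a then eratosthenes F d else 0 := by
      intro d hd
      obtain ⟨hd1, hdx⟩ := Finset.mem_Icc.mp hd
      have hd0 : 0 < d := hd1
      by_cases hsd : IsSmooth P d
      · rw [← Finset.sum_filter]
        have hfe : S.filter (fun q => (0 < q ∧ IsSmooth P q) ∧ (IsSmooth P d ∧ q ∣ d))
            = S.filter (fun q => (0 < q ∧ IsSmooth P q) ∧ q ∣ d) := by
          refine Finset.filter_congr fun q _ => ?_
          simp [hsd]
        rw [hfe, ← Finset.mul_sum]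
        have : ∑ q ∈ S.filter (fun q => (0 < q ∧ IsSmooth P q) ∧ q ∣ d),
            ((ramanujanSum q a : ℤ) : ℂ)
            = ((if d ∣ a then (d : ℤ) else 0 : ℤ) : ℂ) := by
          rw [← Int.cast_sum, key_sum ha hd0 hsd]
        rw [this]
        by_cases hda : d ∣ a
        · rw [if_pos hda, if_pos hda]
          push_cast
          rw [div_mul_cancel₀]
          exact_mod_cast hd0.ne'
        · rw [if_neg hda, if_neg hda, Int.cast_zero, mul_zero]
      · have hda : ¬ d ∣ a := fun hda =>
          hsd fun p pp hpd => le_trans (Nat.le_of_dvd ha (hpd.trans hda)) haP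
        rw [if_neg hda]
        exact Finset.sum_eq_zero fun q _ => by simp [hsd]
    rw [Finset.sum_congr rfl step3]
    rw [← Finset.sum_filter]
    have hfe2 : (Finset.Icc 1 x).filter (· ∣ a) = a.divisors := by
      ext d
      simp only [Finset.mem_filter, Finset.mem_Icc, Nat.mem_divisors]
      constructor
      · rintro ⟨-, h⟩
        exact ⟨h, ha.ne'⟩
      · rintro ⟨h, -⟩
        exact ⟨⟨Nat.pos_of_dvd_of_pos h ha, le_trans (Nat.le_of_dvd ha h) hx⟩, h⟩
    rw [hfe2, sum_erat F ha]
  have hlim2 : Tendsto f atTop (nhds (F a)) := by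
    refine Tendsto.congr' ?_ tendsto_const_nhds
    filter_upwards [eventually_ge_atTop a] with x hx
    exact (hconst x hx).symm
  exact tendsto_nhds_unique hlim2 hlim
end

section
/- (Carmichael coefficients of an imaginary exponential) Fix q ∈ ℕ and j with gcd(j,q) = 1. Then for every ℓ ∈ ℕ, the Carmichael coefficient of the function a ↦ e^{2πi j a / q} equals 1/φ(q) if ℓ = q and 0 otherwise; i.e. (1/φ(ℓ)) · lim_{x→∞} (1/x) ∑_{a ≤ x} e^{2πi j a / q} c_ℓ(a) = 1_{ℓ = q} / φ(q), and in particular the limit exists. -/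
open scoped BigOperators
open Filter Complex

lemma aux_geom_shift (w : ℂ) (N : ℕ) :
    ∑ m ∈ Finset.Icc 1 N, w ^ m = w * ∑ i ∈ Finset.range N, w ^ i := by
  induction N with
  | zero => simp
  | succ n ih =>
    rw [Finset.sum_Icc_succ_top (by omega), ih, Finset.sum_range_succ]
    ring

lemma aux_geom_bound (w : ℂ) (hw : ‖w‖ = 1) (hw1 : w ≠ 1) (N : ℕ) :
    ‖∑ m ∈ Finset.Icc 1 N, w ^ m‖ ≤ 2 / ‖w - 1‖ := by
  rw [aux_geom_shift, geom_sum_eq hw1]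
  rw [norm_mul, norm_div, hw, one_mul]
  have hpos : 0 < ‖w - 1‖ := by rwa [norm_pos_iff, sub_ne_zero]
  apply div_le_div_of_nonneg_right ?_ hpos.le |>.trans_eq rfl
  calc ‖w ^ N - 1‖ ≤ ‖w ^ N‖ + ‖(1 : ℂ)‖ := norm_sub_le _ _
    _ = 2 := by rw [norm_pow, hw]; norm_num

lemma aux_tendsto_ne_one (w : ℂ) (hw : ‖w‖ = 1) (hw1 : w ≠ 1) (d : ℕ) :
    Tendsto (fun x : ℕ => (1 / (x : ℂ)) * ∑ m ∈ Finset.Icc 1 (x / d), w ^ m)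
      atTop (nhds 0) := by
  apply squeeze_zero_norm (a := fun x : ℕ => (2 / ‖w - 1‖) / x)
  · intro x
    rw [norm_mul, norm_div, norm_one, Complex.norm_natCast, one_div_mul_eq_div]
    rcases Nat.eq_zero_or_pos x with hx | hx
    · simp [hx]
    · have hx' : (0 : ℝ) < x := by exact_mod_cast hx
      rw [div_le_div_iff_of_pos_right hx']
      exact aux_geom_bound w hw hw1 _
  · exact tendsto_const_div_atTop_nhds_zero_nat _

lemma aux_tendsto_one (d : ℕ) (hd : 0 < d) :
    Tendsto (fun x : ℕ => (1 / (x : ℂ)) * ((x / d : ℕ) : ℂ))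
      atTop (nhds (1 / (d : ℂ))) := by
  rw [← tendsto_sub_nhds_zero_iff]
  apply squeeze_zero_norm' (a := fun x : ℕ => 1 / (x : ℝ))
  · filter_upwards [eventually_ge_atTop 1] with x hx
    have hx0 : (0 : ℝ) < x := by exact_mod_cast hx
    have hd0 : (0 : ℝ) < d := by exact_mod_cast hd
    have hcast : (1 / (x : ℂ)) * ((x / d : ℕ) : ℂ) - 1 / (d : ℂ) =
        (((((x / d : ℕ) : ℝ) / (x : ℝ) - 1 / (d : ℝ)) : ℝ) : ℂ) := by
      push_cast
      ring
    rw [hcast, Complex.norm_real, Real.norm_eq_abs]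
    have h1 : ((x / d : ℕ) : ℝ) * d ≤ (x : ℝ) := by
      exact_mod_cast Nat.div_mul_le_self x d
    have h2 : (x : ℝ) ≤ ((x / d : ℕ) : ℝ) * d + d := by
      have ha := Nat.div_add_mod x d
      have hb := Nat.mod_lt x hd
      have hc : x ≤ d * (x / d) + d := by omega
      have := (Nat.cast_le (α := ℝ)).2 hc
      push_cast at this
      linarith
    rw [div_sub_div _ _ hx0.ne' hd0.ne', abs_div, abs_of_pos (mul_pos hx0 hd0),
      div_le_div_iff₀ (mul_pos hx0 hd0) hx0]
    have habs : |((x / d : ℕ) : ℝ) * d - (x : ℝ) * 1| ≤ d := by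
      rw [abs_le]; constructor <;> nlinarith
    nlinarith [mul_le_mul_of_nonneg_right habs hx0.le]
  · exact tendsto_const_div_atTop_nhds_zero_nat _

lemma aux_moebius_sum (q ℓ : ℕ) (hq : 0 < q) (hℓ : 0 < ℓ) :
    ∑ d ∈ ℓ.divisors.filter (q ∣ ·), (ArithmeticFunction.moebius (ℓ / d) : ℤ) =
      if ℓ = q then 1 else 0 := by
  rw [Finset.sum_filter]
  have step1 : ∑ d ∈ ℓ.divisors, (if q ∣ d then (ArithmeticFunction.moebius (ℓ / d) : ℤ) else 0)
      = ∑ d ∈ ℓ.divisors, (if q ∣ ℓ / d then (ArithmeticFunction.moebius d : ℤ) else 0) := by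
    rw [← Nat.sum_div_divisors ℓ (fun d => if q ∣ ℓ / d then (ArithmeticFunction.moebius d : ℤ) else 0)]
    apply Finset.sum_congr rfl
    intro d hd
    rw [Nat.mem_divisors] at hd
    rw [Nat.div_div_self hd.1 hd.2]
  rw [step1]
  by_cases hqℓ : q ∣ ℓ
  · have hfilter : ℓ.divisors.filter (fun d => q ∣ ℓ / d) = (ℓ / q).divisors := by
      ext d
      simp only [Finset.mem_filter, Nat.mem_divisors]
      constructor
      · rintro ⟨⟨hdℓ, hℓ0⟩, hqd⟩
        refine ⟨?_, (Nat.div_pos (Nat.le_of_dvd hℓ hqℓ) hq).ne'⟩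
        rw [Nat.dvd_div_iff_mul_dvd hqℓ, mul_comm]
        calc d * q ∣ d * (ℓ / d) := mul_dvd_mul_left d hqd
          _ = ℓ := Nat.mul_div_cancel' hdℓ
      · rintro ⟨hdn, hn0⟩
        have hdq : q * d ∣ ℓ := (Nat.dvd_div_iff_mul_dvd hqℓ).mp hdn
        have hdl : d ∣ ℓ := dvd_trans (dvd_mul_left d q) hdq
        refine ⟨⟨hdl, hℓ.ne'⟩, ?_⟩
        rw [Nat.dvd_div_iff_mul_dvd hdl]
        rwa [mul_comm] at hdq
    rw [← Finset.sum_filter, hfilter]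
    have hmz : ∑ d ∈ (ℓ / q).divisors, (ArithmeticFunction.moebius d : ℤ) =
        if ℓ / q = 1 then 1 else 0 := by
      have := congrFun (congrArg (fun f => f.toFun) ArithmeticFunction.moebius_mul_coe_zeta) (ℓ / q)
      rw [← ArithmeticFunction.one_apply (R := ℤ) (x := ℓ / q),
        ← ArithmeticFunction.moebius_mul_coe_zeta, ArithmeticFunction.coe_mul_zeta_apply]
    rw [hmz]
    congr 1
    · simp only [eq_iff_iff]
      constructor
      · intro h
        have := Nat.div_mul_cancel hqℓ
        rw [h, one_mul] at this
        omega
      · intro h; rw [h, Nat.div_self hq]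
  · have : ∀ d ∈ ℓ.divisors, (if q ∣ ℓ / d then (ArithmeticFunction.moebius d : ℤ) else 0) = 0 := by
      intro d hd
      rw [Nat.mem_divisors] at hd
      rw [if_neg]
      intro hqd
      exact hqℓ (dvd_trans hqd (Nat.div_dvd_of_dvd hd.1))
    rw [Finset.sum_congr rfl this, Finset.sum_const_zero, if_neg]
    intro h; exact hqℓ (h ▸ dvd_refl q)

lemma aux_gcd_divisors (a ℓ : ℕ) (ha : a ≠ 0) (hℓ : ℓ ≠ 0) :
    (Nat.gcd a ℓ).divisors = ℓ.divisors.filter (· ∣ a) := by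
  ext e
  simp only [Nat.mem_divisors, Finset.mem_filter]
  constructor
  · rintro ⟨he, -⟩
    exact ⟨⟨he.trans (Nat.gcd_dvd_right a ℓ), hℓ⟩, he.trans (Nat.gcd_dvd_left a ℓ)⟩
  · rintro ⟨⟨heℓ, -⟩, hea⟩
    exact ⟨Nat.dvd_gcd hea heℓ, Nat.gcd_ne_zero_left ha⟩

lemma aux_reindex (d x : ℕ) (hd : 0 < d) (f : ℕ → ℂ) :
    ∑ a ∈ (Finset.Icc 1 x).filter (d ∣ ·), f a = ∑ m ∈ Finset.Icc 1 (x / d), f (d * m) := by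
  apply Finset.sum_nbij' (i := fun a => a / d) (j := fun m => d * m)
  · intro a ha
    simp only [Finset.mem_filter, Finset.mem_Icc] at ha ⊢
    obtain ⟨⟨h1, h2⟩, h3⟩ := ha
    exact ⟨Nat.one_le_div_iff hd |>.mpr (Nat.le_of_dvd h1 h3), Nat.div_le_div_right h2⟩
  · intro m hm
    simp only [Finset.mem_filter, Finset.mem_Icc] at hm ⊢
    obtain ⟨h1, h2⟩ := hm
    refine ⟨⟨Nat.one_le_iff_ne_zero.mpr (by positivity), ?_⟩, dvd_mul_right d m⟩
    rw [mul_comm]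
    exact (Nat.le_div_iff_mul_le hd).mp h2
  · intro a ha
    simp only [Finset.mem_filter] at ha
    exact Nat.mul_div_cancel' ha.2
  · intro m hm
    exact Nat.mul_div_cancel_left m hd
  · intro a ha
    simp only [Finset.mem_filter] at ha
    rw [Nat.mul_div_cancel' ha.2]

lemma aux_rearrange (q j ℓ : ℕ) (hℓ : 0 < ℓ) (x : ℕ) :
    (1 / (Nat.totient ℓ : ℂ)) * ((1 / (x : ℂ)) *
        ∑ a ∈ Finset.Icc 1 x,
          Complex.exp (2 * Real.pi * Complex.I * j * a / q) * (ramanujanSum ℓ a : ℂ)) =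
      ∑ d ∈ ℓ.divisors, (1 / (Nat.totient ℓ : ℂ)) *
        ((d : ℂ) * (ArithmeticFunction.moebius (ℓ / d) : ℂ)) *
        ((1 / (x : ℂ)) * ∑ m ∈ Finset.Icc 1 (x / d),
          Complex.exp (2 * Real.pi * Complex.I * j * d / q) ^ m) := by
  have step1 : ∑ a ∈ Finset.Icc 1 x,
      Complex.exp (2 * Real.pi * Complex.I * j * a / q) * (ramanujanSum ℓ a : ℂ) =
      ∑ d ∈ ℓ.divisors, ((d : ℂ) * (ArithmeticFunction.moebius (ℓ / d) : ℂ)) *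
        ∑ m ∈ Finset.Icc 1 (x / d),
          Complex.exp (2 * Real.pi * Complex.I * j * d / q) ^ m := by
    have expand : ∀ a ∈ Finset.Icc 1 x,
        Complex.exp (2 * Real.pi * Complex.I * j * a / q) * (ramanujanSum ℓ a : ℂ) =
        ∑ d ∈ ℓ.divisors, (if d ∣ a then
          Complex.exp (2 * Real.pi * Complex.I * j * a / q) *
            ((d : ℂ) * (ArithmeticFunction.moebius (ℓ / d) : ℂ)) else 0) := by
      intro a ha
      rw [Finset.mem_Icc] at ha
      have h1 : (ramanujanSum ℓ a : ℂ) =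
          ∑ d ∈ ℓ.divisors.filter (· ∣ a), ((d : ℂ) * (ArithmeticFunction.moebius (ℓ / d) : ℂ)) := by
        rw [ramanujanSum, aux_gcd_divisors a ℓ (by omega) hℓ.ne']
        push_cast
        rfl
      rw [h1, Finset.mul_sum, Finset.sum_filter]
    rw [Finset.sum_congr rfl expand, Finset.sum_comm]
    apply Finset.sum_congr rfl
    intro d hd
    have hd0 : 0 < d := Nat.pos_of_mem_divisors hd
    rw [← Finset.sum_filter, Finset.sum_congr rfl (fun a _ => mul_comm _ _), ← Finset.mul_sum,
      aux_reindex d x hd0]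
    congr 1
    apply Finset.sum_congr rfl
    intro m _
    rw [← Complex.exp_nat_mul]
    congr 1
    push_cast
    ring
  rw [step1, Finset.mul_sum, Finset.mul_sum]
  apply Finset.sum_congr rfl
  intro d hd
  ring

lemma aux_w_abs (q j d : ℕ) :
    ‖Complex.exp (2 * Real.pi * Complex.I * j * d / q)‖ = 1 := by
  have : (2 * Real.pi * Complex.I * j * d / q : ℂ) =
      ((2 * Real.pi * j * d / q : ℝ) : ℂ) * Complex.I := by
    push_cast
    ring
  rw [this, Complex.norm_exp_ofReal_mul_I]

lemma aux_w_one (q j d : ℕ) (hq : 0 < q) (hqd : q ∣ d) :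
    Complex.exp (2 * Real.pi * Complex.I * j * d / q) = 1 := by
  obtain ⟨k, rfl⟩ := hqd
  have hq0 : (q : ℂ) ≠ 0 := Nat.cast_ne_zero.mpr hq.ne'
  have : (2 * Real.pi * Complex.I * j * ((q * k : ℕ) : ℂ) / q : ℂ) =
      ((j * k : ℕ) : ℂ) * (2 * Real.pi * Complex.I) := by
    push_cast
    field_simp
  rw [this, Complex.exp_nat_mul_two_pi_mul_I]

lemma aux_w_ne_one (q j d : ℕ) (hq : 0 < q) (hj : Nat.Coprime j q) (hqd : ¬ q ∣ d) :
    Complex.exp (2 * Real.pi * Complex.I * j * d / q) ≠ 1 := by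
  intro h
  rw [Complex.exp_eq_one_iff] at h
  obtain ⟨n, hn⟩ := h
  have hq0 : (q : ℂ) ≠ 0 := Nat.cast_ne_zero.mpr hq.ne'
  have hπ : (Real.pi : ℂ) ≠ 0 := Complex.ofReal_ne_zero.mpr Real.pi_ne_zero
  have key : ((j * d : ℕ) : ℂ) = ((n * q : ℤ) : ℂ) := by
    have h2 : (2 * (Real.pi : ℂ) * Complex.I) * ((j : ℂ) * d) =
        (2 * (Real.pi : ℂ) * Complex.I) * ((n : ℂ) * q) := by
      field_simp at hn
      push_cast
      linear_combination (2 * (Real.pi : ℂ) * Complex.I) * hn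
    have h3 := mul_left_cancel₀ (by simp [hπ, Complex.I_ne_zero]) h2
    push_cast
    exact h3
  have key2 : ((j * d : ℕ) : ℤ) = n * q := by exact_mod_cast key
  have hdvd : q ∣ j * d := by
    rw [← Int.natCast_dvd_natCast]
    exact ⟨n, by rw [key2, mul_comm]⟩
  exact hqd (Nat.Coprime.dvd_of_dvd_mul_left hj.symm hdvd)

/-- (Carmichael coefficients of an imaginary exponential.) Fix `q ≥ 1` and `j`
coprime to `q`. For every `ℓ ≥ 1`, the Carmichael `ℓ`-th coefficient of
`a ↦ e^{2πi j a / q}` exists and equals `1_{ℓ = q} / φ(q)`. -/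
theorem stmt15 (q : ℕ) (hq : 0 < q) (j : ℕ) (hj : Nat.Coprime j q)
    (ℓ : ℕ) (hℓ : 0 < ℓ) :
    Tendsto
      (fun x : ℕ =>
        (1 / (Nat.totient ℓ : ℂ)) * ((1 / (x : ℂ)) *
          ∑ a ∈ Finset.Icc 1 x,
            Complex.exp (2 * Real.pi * Complex.I * j * a / q) * (ramanujanSum ℓ a : ℂ)))
      atTop (nhds (if ℓ = q then 1 / (Nat.totient q : ℂ) else 0)) := by
  have hfun : (fun x : ℕ =>
      (1 / (Nat.totient ℓ : ℂ)) * ((1 / (x : ℂ)) *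
        ∑ a ∈ Finset.Icc 1 x,
          Complex.exp (2 * Real.pi * Complex.I * j * a / q) * (ramanujanSum ℓ a : ℂ))) =
      fun x : ℕ => ∑ d ∈ ℓ.divisors, (1 / (Nat.totient ℓ : ℂ)) *
        ((d : ℂ) * (ArithmeticFunction.moebius (ℓ / d) : ℂ)) *
        ((1 / (x : ℂ)) * ∑ m ∈ Finset.Icc 1 (x / d),
          Complex.exp (2 * Real.pi * Complex.I * j * d / q) ^ m) :=
    funext (aux_rearrange q j ℓ hℓ)
  rw [hfun]
  have hsum : ∑ d ∈ ℓ.divisors, (if q ∣ d then (1 / (Nat.totient ℓ : ℂ)) *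
      ((d : ℂ) * (ArithmeticFunction.moebius (ℓ / d) : ℂ)) * (1 / (d : ℂ)) else 0) =
      (if ℓ = q then 1 / (Nat.totient q : ℂ) else 0) := by
    rw [← Finset.sum_filter]
    have hcong : ∀ d ∈ ℓ.divisors.filter (q ∣ ·), (1 / (Nat.totient ℓ : ℂ)) *
        ((d : ℂ) * (ArithmeticFunction.moebius (ℓ / d) : ℂ)) * (1 / (d : ℂ)) =
        (1 / (Nat.totient ℓ : ℂ)) * (ArithmeticFunction.moebius (ℓ / d) : ℂ) := by
      intro d hd
      have hd0 : (d : ℂ) ≠ 0 := Nat.cast_ne_zero.mpr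
        (Nat.pos_of_mem_divisors (Finset.mem_filter.mp hd).1).ne'
      field_simp
    rw [Finset.sum_congr rfl hcong, ← Finset.mul_sum]
    have hcast : (∑ d ∈ ℓ.divisors.filter (q ∣ ·), (ArithmeticFunction.moebius (ℓ / d) : ℂ)) =
        ((∑ d ∈ ℓ.divisors.filter (q ∣ ·), ArithmeticFunction.moebius (ℓ / d) : ℤ) : ℂ) := by
      push_cast
      rfl
    rw [hcast, aux_moebius_sum q ℓ hq hℓ]
    by_cases h : ℓ = q
    · subst h
      simp
    · simp [h]
  rw [← hsum]
  apply tendsto_finset_sum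
  intro d hd
  by_cases hqd : q ∣ d
  · rw [if_pos hqd]
    have hfun2 : (fun x : ℕ => (1 / (Nat.totient ℓ : ℂ)) *
        ((d : ℂ) * (ArithmeticFunction.moebius (ℓ / d) : ℂ)) *
        ((1 / (x : ℂ)) * ∑ m ∈ Finset.Icc 1 (x / d),
          Complex.exp (2 * Real.pi * Complex.I * j * d / q) ^ m)) =
        fun x : ℕ => (1 / (Nat.totient ℓ : ℂ)) *
        ((d : ℂ) * (ArithmeticFunction.moebius (ℓ / d) : ℂ)) *
        ((1 / (x : ℂ)) * ((x / d : ℕ) : ℂ)) := by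
      funext x
      rw [aux_w_one q j d hq hqd]
      simp [Nat.card_Icc]
    rw [hfun2]
    exact (aux_tendsto_one d (Nat.pos_of_mem_divisors hd)).const_mul _
  · rw [if_neg hqd]
    have h0 := (aux_tendsto_ne_one _ (aux_w_abs q j d)
      (aux_w_ne_one q j d hq hj hqd) d).const_mul
      ((1 / (Nat.totient ℓ : ℂ)) * ((d : ℂ) * (ArithmeticFunction.moebius (ℓ / d) : ℂ)))
    simpa using h0
end

section
/- (Absorbing extra factors in Ramanujan sums) For all ℓ, b, t ∈ ℕ: c_ℓ(bt) = (φ(ℓ)/φ(ℓ/gcd(ℓ,b))) · c_{ℓ/gcd(ℓ,b)}(t). -/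
open scoped BigOperators

/-- The arithmetic function `d ↦ if d ∣ a then d else 0`. -/
noncomputable def rsAux (a : ℕ) : ArithmeticFunction ℤ :=
  ⟨fun d => if d ∣ a then (d : ℤ) else 0, by simp⟩

lemma rsAux_apply (a d : ℕ) : rsAux a d = if d ∣ a then (d : ℤ) else 0 := rfl

lemma rsAux_isMultiplicative (a : ℕ) : (rsAux a).IsMultiplicative := by
  refine ⟨by simp [rsAux_apply], ?_⟩
  intro m n hmn
  simp only [rsAux_apply]
  by_cases hm : m ∣ a <;> by_cases hn : n ∣ a
  · rw [if_pos hm, if_pos hn, if_pos (hmn.mul_dvd_of_dvd_of_dvd hm hn)]; push_cast; ring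
  · rw [if_pos hm, if_neg hn, if_neg (fun h => hn (dvd_trans (dvd_mul_left n m) h))]; ring
  · rw [if_neg hm, if_pos hn, if_neg (fun h => hm (dvd_trans (dvd_mul_right m n) h))]; ring
  · rw [if_neg hm, if_neg hn, if_neg (fun h => hm (dvd_trans (dvd_mul_right m n) h))]; ring

lemma ramanujanSum_eq_conv (q a : ℕ) :
    ramanujanSum q a = (rsAux a * ArithmeticFunction.moebius) q := by
  rcases eq_or_ne q 0 with rfl | hq
  · simp [ramanujanSum, Nat.gcd_zero_right]
  rw [ArithmeticFunction.mul_apply, Nat.sum_divisorsAntidiagonal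
    (fun x y => rsAux a x * ArithmeticFunction.moebius y)]
  have hdiv : (Nat.gcd a q).divisors = q.divisors.filter (· ∣ a) := by
    ext d
    have hgne : Nat.gcd a q ≠ 0 := Nat.gcd_ne_zero_right hq
    simp only [Nat.mem_divisors, Finset.mem_filter, Nat.dvd_gcd_iff]
    tauto
  rw [ramanujanSum, hdiv, Finset.sum_filter]
  refine Finset.sum_congr rfl fun d _ => ?_
  rw [rsAux_apply]
  split_ifs <;> simp

lemma ramanujanSum_isMultiplicative (a q₁ q₂ : ℕ) (h : Nat.Coprime q₁ q₂) :
    ramanujanSum (q₁ * q₂) a = ramanujanSum q₁ a * ramanujanSum q₂ a := by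
  rw [ramanujanSum_eq_conv, ramanujanSum_eq_conv, ramanujanSum_eq_conv]
  exact ((rsAux_isMultiplicative a).mul ArithmeticFunction.isMultiplicative_moebius).map_mul_of_coprime h

/-- Hölder's formula, in product form. -/
lemma holder (a : ℕ) : ∀ q : ℕ, 0 < q →
    ramanujanSum q a * (Nat.totient (q / Nat.gcd a q) : ℤ) =
      (Nat.totient q : ℤ) * ArithmeticFunction.moebius (q / Nat.gcd a q) := by
  intro q
  induction q using Nat.recOnPosPrimePosCoprime with
  | zero => intro h; exact absurd h (lt_irrefl 0)
  | one => intro _; simp [ramanujanSum]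
  | prime_pow p k hp hk =>
    intro _
    have hp' : p.Prime := hp
    -- gcd a (p^k) = p^m for some m ≤ k
    obtain ⟨m, hmk, hg⟩ := (Nat.dvd_prime_pow hp').1 (Nat.gcd_dvd_right a (p ^ k))
    have hdvd : ∀ j, j ≤ k → (p ^ j ∣ a ↔ j ≤ m) := by
      intro j hj
      constructor
      · intro hja
        have : p ^ j ∣ p ^ m := hg ▸ Nat.dvd_gcd hja (pow_dvd_pow p hj)
        exact (Nat.pow_dvd_pow_iff_le_right hp'.one_lt).1 this
      · intro hjm
        exact dvd_trans (pow_dvd_pow p hjm) (hg ▸ Nat.gcd_dvd_left a (p ^ k))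
    have hqg : p ^ k / Nat.gcd a (p ^ k) = p ^ (k - m) := by
      rw [hg, Nat.pow_div hmk hp'.pos]
    rw [hqg]
    have hconv := ramanujanSum_eq_conv (p ^ k) a
    rw [ArithmeticFunction.mul_apply, Nat.sum_divisorsAntidiagonal
      (fun x y => rsAux a x * ArithmeticFunction.moebius y), Nat.sum_divisors_prime_pow hp']
      at hconv
    obtain ⟨n, rfl⟩ : ∃ n, k = n + 1 := ⟨k - 1, by omega⟩
    rw [Finset.sum_range_succ, Finset.sum_range_succ] at hconv
    have hzero : ∑ j ∈ Finset.range n,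
        rsAux a (p ^ j) * ArithmeticFunction.moebius (p ^ (n + 1) / p ^ j) = 0 := by
      refine Finset.sum_eq_zero fun j hj => ?_
      rw [Finset.mem_range] at hj
      rw [Nat.pow_div (by omega) hp'.pos,
        ArithmeticFunction.moebius_apply_prime_pow hp' (by omega), if_neg (by omega)]
      ring
    rw [hzero, zero_add, Nat.pow_div (by omega) hp'.pos, Nat.pow_div (le_refl _) hp'.pos,
      Nat.sub_self, pow_zero, ArithmeticFunction.moebius_apply_one,
      show n + 1 - n = 1 by omega, pow_one, ArithmeticFunction.moebius_apply_prime hp',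
      rsAux_apply, rsAux_apply] at hconv
    simp only [hdvd n (by omega), hdvd (n + 1) (le_refl _)] at hconv
    rw [hconv]
    rcases Nat.lt_or_ge m (n + 1) with hm | hm
    · rw [if_neg (show ¬ n + 1 ≤ m by omega)]
      rcases Nat.lt_or_ge m n with hm' | hm'
      · -- m ≤ n - 1 : moebius of p^(n+1-m) is 0, and p^n does not divide a
        rw [if_neg (show ¬ n ≤ m by omega),
          ArithmeticFunction.moebius_apply_prime_pow hp' (by omega), if_neg (by omega)]
        ring
      · -- m = n
        have : m = n := by omega
        subst this
        rw [if_pos (le_refl m), show m + 1 - m = 1 by omega, pow_one,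
          ArithmeticFunction.moebius_apply_prime hp', Nat.totient_prime hp',
          Nat.totient_prime_pow hp' (by omega)]
        push_cast
        simp only [Nat.cast_sub hp'.one_le]
        push_cast
        ring
    · -- m = n + 1
      have : m = n + 1 := by omega
      subst this
      rw [if_pos (le_refl _), if_pos (show n ≤ n + 1 by omega), Nat.sub_self, pow_zero,
        ArithmeticFunction.moebius_apply_one, Nat.totient_one,
        Nat.totient_prime_pow hp' (by omega)]
      push_cast
      simp only [Nat.cast_sub hp'.one_le]
      push_cast
      ring
  | coprime q₁ q₂ hq₁ hq₂ hco IH1 IH2 =>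
    intro _
    have h1 : 0 < q₁ := by omega
    have h2 : 0 < q₂ := by omega
    have hg : Nat.gcd a (q₁ * q₂) = Nat.gcd a q₁ * Nat.gcd a q₂ := Nat.Coprime.gcd_mul a hco
    have hd1 : Nat.gcd a q₁ ∣ q₁ := Nat.gcd_dvd_right a q₁
    have hd2 : Nat.gcd a q₂ ∣ q₂ := Nat.gcd_dvd_right a q₂
    have hdiv : q₁ * q₂ / Nat.gcd a (q₁ * q₂) = (q₁ / Nat.gcd a q₁) * (q₂ / Nat.gcd a q₂) := by
      rw [hg, Nat.div_mul_div_comm hd1 hd2]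
    have hco' : Nat.Coprime (q₁ / Nat.gcd a q₁) (q₂ / Nat.gcd a q₂) :=
      Nat.Coprime.coprime_dvd_left (Nat.div_dvd_of_dvd hd1)
        (Nat.Coprime.coprime_dvd_right (Nat.div_dvd_of_dvd hd2) hco)
    rw [hdiv, ramanujanSum_isMultiplicative a q₁ q₂ hco, Nat.totient_mul hco',
      Nat.totient_mul hco,
      ArithmeticFunction.isMultiplicative_moebius.map_mul_of_coprime hco']
    have e1 := IH1 h1
    have e2 := IH2 h2
    push_cast
    linear_combination ((Nat.totient (q₂ / Nat.gcd a q₂) : ℤ) * ramanujanSum q₂ a) * e1 +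
      ((Nat.totient q₁ : ℤ) * ArithmeticFunction.moebius (q₁ / Nat.gcd a q₁)) * e2

lemma gcd_key (ℓ b t : ℕ) (hℓ : 0 < ℓ) :
    Nat.gcd (b * t) ℓ = Nat.gcd ℓ b * Nat.gcd t (ℓ / Nat.gcd ℓ b) := by
  rcases eq_or_ne b 0 with rfl | hb
  · simp [Nat.gcd_zero_right, Nat.div_self hℓ]
  rcases eq_or_ne t 0 with rfl | ht
  · simp [Nat.mul_div_cancel' (Nat.gcd_dvd_left ℓ b)]
  have hg1 : Nat.gcd ℓ b ≠ 0 := Nat.gcd_ne_zero_left hℓ.ne'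
  have hℓ' : ℓ / Nat.gcd ℓ b ≠ 0 :=
    (Nat.div_pos (Nat.le_of_dvd hℓ (Nat.gcd_dvd_left ℓ b)) (Nat.pos_of_ne_zero hg1)).ne'
  have hbt : b * t ≠ 0 := mul_ne_zero hb ht
  have hlhs : Nat.gcd (b * t) ℓ ≠ 0 := Nat.gcd_ne_zero_left hbt
  have hrhs : Nat.gcd ℓ b * Nat.gcd t (ℓ / Nat.gcd ℓ b) ≠ 0 :=
    mul_ne_zero hg1 (Nat.gcd_ne_zero_right hℓ')
  apply Nat.factorization_inj hlhs hrhs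
  have h1 := Nat.factorization_gcd hbt hℓ.ne'
  have h2 := Nat.factorization_gcd (show ℓ ≠ 0 from hℓ.ne') hb
  have h3 := Nat.factorization_gcd ht hℓ'
  have h4 := Nat.factorization_div (Nat.gcd_dvd_left ℓ b)
  rw [h1, Nat.factorization_mul hg1 (Nat.gcd_ne_zero_right hℓ'), h2, h3, h4, h2,
    Nat.factorization_mul hb ht]
  ext p
  simp only [Finsupp.inf_apply, Finsupp.add_apply, Finsupp.tsub_apply]
  omega

/-- (Absorbing extra factors in Ramanujan sums.)
`c_ℓ(bt) = (φ(ℓ)/φ(ℓ/gcd(ℓ,b))) · c_{ℓ/gcd(ℓ,b)}(t)`. -/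
theorem stmt16 (ℓ b t : ℕ) (hℓ : 0 < ℓ) :
    (ramanujanSum ℓ (b * t) : ℚ) =
      (Nat.totient ℓ : ℚ) / (Nat.totient (ℓ / Nat.gcd ℓ b) : ℚ) *
        (ramanujanSum (ℓ / Nat.gcd ℓ b) t : ℚ) := by
  set ℓ' := ℓ / Nat.gcd ℓ b with hℓ'def
  have hℓ' : 0 < ℓ' :=
    Nat.div_pos (Nat.le_of_dvd hℓ (Nat.gcd_dvd_left ℓ b)) (Nat.gcd_pos_of_pos_left b hℓ)
  have key : ℓ / Nat.gcd (b * t) ℓ = ℓ' / Nat.gcd t ℓ' := by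
    rw [gcd_key ℓ b t hℓ, ← Nat.div_div_eq_div_mul, hℓ'def]
  have H1 := holder (b * t) ℓ hℓ
  have H2 := holder t ℓ' hℓ'
  rw [key] at H1
  set m := ℓ' / Nat.gcd t ℓ' with hmdef
  have hm : 0 < m :=
    Nat.div_pos (Nat.le_of_dvd hℓ' (Nat.gcd_dvd_right t ℓ')) (Nat.gcd_pos_of_pos_right t hℓ')
  have hφm : ((Nat.totient m : ℚ)) ≠ 0 := by
    exact_mod_cast (Nat.totient_pos.2 hm).ne'
  have hφℓ' : ((Nat.totient ℓ' : ℚ)) ≠ 0 := by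
    exact_mod_cast (Nat.totient_pos.2 hℓ').ne'
  have Q1 : (ramanujanSum ℓ (b * t) : ℚ) * (Nat.totient m : ℚ) =
      (Nat.totient ℓ : ℚ) * (ArithmeticFunction.moebius m : ℚ) := by exact_mod_cast H1
  have Q2 : (ramanujanSum ℓ' t : ℚ) * (Nat.totient m : ℚ) =
      (Nat.totient ℓ' : ℚ) * (ArithmeticFunction.moebius m : ℚ) := by exact_mod_cast H2
  have E1 : (ramanujanSum ℓ (b * t) : ℚ) =
      (Nat.totient ℓ : ℚ) * (ArithmeticFunction.moebius m : ℚ) / (Nat.totient m : ℚ) := by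
    rw [eq_div_iff hφm]; exact Q1
  have E2 : (ramanujanSum ℓ' t : ℚ) =
      (Nat.totient ℓ' : ℚ) * (ArithmeticFunction.moebius m : ℚ) / (Nat.totient m : ℚ) := by
    rw [eq_div_iff hφm]; exact Q2
  rw [E1, E2]
  field_simp
end

section
/- Fix an odd prime p₀ and define S_{p₀}(d) := ∑_{a | d, a ≡ 1 mod p₀} μ(d/a). If d is coprime to p₀, d > 1, and some prime p dividing d satisfies p ≡ 1 mod p₀, then S_{p₀}(d) = 0. -/
open scoped BigOperators Classical

/-- `S_{p₀}(d) = ∑_{a | d, a ≡ 1 mod p₀} μ(d/a)`. -/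
noncomputable def S (p₀ d : ℕ) : ℤ :=
  ∑ a ∈ d.divisors.filter (fun a => a % p₀ = 1), ArithmeticFunction.moebius (d / a)

/-- For an odd prime `p₀`: if `d > 1` is coprime to `p₀` and some prime `p | d`
satisfies `p ≡ 1 mod p₀`, then `S_{p₀}(d) = 0`. -/
theorem stmt19 (p₀ : ℕ) (hp₀ : p₀.Prime) (hodd : Odd p₀)
    (d : ℕ) (hd : 1 < d) (hco : Nat.Coprime d p₀)
    (p : ℕ) (hp : p.Prime) (hpd : p ∣ d) (hp1 : p % p₀ = 1) :
    S p₀ d = 0 := by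
  classical
  have hd0 : d ≠ 0 := by omega
  have hp0 : 1 < p₀ := hp₀.one_lt
  have hppos : 0 < p := hp.pos
  have hk : 0 < d.factorization p := hp.factorization_pos_of_dvd hd0 hpd
  set k := d.factorization p with hkdef
  -- moebius of p * m for p not dividing m
  have hmu : ∀ m : ℕ, ¬ p ∣ m →
      ArithmeticFunction.moebius (p * m) = - ArithmeticFunction.moebius m := by
    intro m hm
    rw [ArithmeticFunction.isMultiplicative_moebius.map_mul_of_coprime
      (hp.coprime_iff_not_dvd.mpr hm), ArithmeticFunction.moebius_apply_prime hp,
      neg_one_mul]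
  have hvle : ∀ a : ℕ, a ∣ d → a.factorization p ≤ k :=
    fun a had => (hp.pow_dvd_iff_le_factorization hd0).mp ((Nat.ordProj_dvd a p).trans had)
  -- congruence helpers
  have hmul : ∀ n : ℕ, n % p₀ = 1 → (n * p) % p₀ = 1 := by
    intro n h
    rw [Nat.mul_mod, h, hp1, one_mul]
    exact Nat.mod_eq_of_lt hp0
  have hdivmod : ∀ n : ℕ, p ∣ n → n % p₀ = 1 → (n / p) % p₀ = 1 := by
    intro n hpn h
    obtain ⟨b, rfl⟩ := hpn
    rw [Nat.mul_div_cancel_left _ hppos]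
    rw [Nat.mul_mod, hp1, one_mul, Nat.mod_mod_of_dvd _ dvd_rfl] at h
    exact h
  -- case 1 analysis
  have key1 : ∀ a : ℕ, a ∣ d → a ≠ 0 → p ^ k ∣ a →
      p ∣ a ∧ (a / p) ∣ d ∧ d / (a / p) = p * (d / a) ∧ ¬ p ∣ d / a
        ∧ ¬ p ^ k ∣ a / p ∧ p ^ (k - 1) ∣ a / p := by
    intro a had ha0 h1
    have hpa : p ∣ a := (dvd_pow_self p hk.ne').trans h1
    have hvak : a.factorization p = k :=
      le_antisymm (hvle a had) ((hp.pow_dvd_iff_le_factorization ha0).mp h1)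
    obtain ⟨b, rfl⟩ := hpa
    have hb0 : b ≠ 0 := by rintro rfl; simp at ha0
    have hbp : p * b / p = b := Nat.mul_div_cancel_left b hppos
    obtain ⟨m, hm⟩ := had
    have hm0 : m ≠ 0 := by rintro rfl; simp [hm] at hd0
    have h2 : d / (p * b) = m := by
      rw [hm]; exact Nat.mul_div_cancel_left m (Nat.pos_of_ne_zero (mul_ne_zero hppos.ne' hb0))
    have h3 : d / b = p * m := by
      rw [hm, mul_comm p b, mul_assoc]
      exact Nat.mul_div_cancel_left _ (Nat.pos_of_ne_zero hb0)
    have hvb : (p * b).factorization p = 1 + b.factorization p := by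
      rw [Nat.factorization_mul hppos.ne' hb0]
      simp [hp.factorization]
    have hdm : k = k + m.factorization p := by
      conv_lhs => rw [hkdef, hm]
      rw [Nat.factorization_mul (mul_ne_zero hppos.ne' hb0) hm0, Finsupp.add_apply, hvak]
    have hpm : ¬ p ∣ m := fun h => by
      have := hp.factorization_pos_of_dvd hm0 h; omega
    have hbfact : b.factorization p = k - 1 := by omega
    refine ⟨Dvd.intro b rfl, ?_, ?_, ?_, ?_, ?_⟩
    · rw [hbp, hm]; exact ⟨p * m, by ring⟩
    · rw [hbp, h3, h2]
    · rw [h2]; exact hpm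
    · rw [hbp]
      intro h
      have := (hp.pow_dvd_iff_le_factorization hb0).mp h
      omega
    · rw [hbp]
      exact (hp.pow_dvd_iff_le_factorization hb0).mpr (by omega)
  -- case 2 analysis
  have key2 : ∀ a : ℕ, a ∣ d → a ≠ 0 → ¬ p ^ k ∣ a → p ^ (k - 1) ∣ a →
      a * p ∣ d ∧ p ^ k ∣ a * p := by
    intro a had ha0 h1 h2
    have hva1 : k - 1 ≤ a.factorization p := (hp.pow_dvd_iff_le_factorization ha0).mp h2
    have hva2 : ¬ k ≤ a.factorization p := fun h =>
      h1 ((hp.pow_dvd_iff_le_factorization ha0).mpr h)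
    have hva : a.factorization p = k - 1 := by omega
    have hap0 : a * p ≠ 0 := mul_ne_zero ha0 hppos.ne'
    have hfap : (a * p).factorization p = k := by
      rw [Nat.factorization_mul ha0 hppos.ne', Finsupp.add_apply, hva]
      simp [hp.factorization]
      omega
    have hle : a.factorization ≤ d.factorization :=
      (Nat.factorization_le_iff_dvd ha0 hd0).mpr had
    constructor
    · refine (Nat.factorization_le_iff_dvd hap0 hd0).mp ?_
      intro q
      rw [Nat.factorization_mul ha0 hppos.ne', Finsupp.add_apply]
      by_cases hq : q = p
      · subst hq
        simp only [hp.factorization, Finsupp.single_eq_same]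
        omega
      · simp only [hp.factorization, Finsupp.single_apply, if_neg (Ne.symm hq), add_zero]
        exact hle q
    · exact (hp.pow_dvd_iff_le_factorization hap0).mpr (le_of_eq hfap.symm)
  -- case 3: moebius vanishes
  have key3 : ∀ a : ℕ, a ∣ d → a ≠ 0 → ¬ p ^ (k - 1) ∣ a →
      ArithmeticFunction.moebius (d / a) = 0 := by
    intro a had ha0 h3
    have hva : ¬ k - 1 ≤ a.factorization p := fun h =>
      h3 ((hp.pow_dvd_iff_le_factorization ha0).mpr h)
    have hda0 : d / a ≠ 0 :=
      (Nat.div_pos (Nat.le_of_dvd (Nat.pos_of_ne_zero hd0) had) (Nat.pos_of_ne_zero ha0)).ne'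
    have hfd : (d / a).factorization p = k - a.factorization p := by
      rw [Nat.factorization_div had, Finsupp.tsub_apply]
    have hsq : p ^ 2 ∣ d / a :=
      (hp.pow_dvd_iff_le_factorization hda0).mpr (by omega)
    refine ArithmeticFunction.moebius_eq_zero_of_not_squarefree (fun hs => ?_)
    exact hp.not_isUnit (hs p (by rwa [← sq]))
  -- membership unpacking
  have haux : ∀ a : ℕ, a ∈ d.divisors.filter (fun a => a % p₀ = 1) →
      a ∣ d ∧ a ≠ 0 ∧ a % p₀ = 1 := by
    intro a ha
    simp only [Finset.mem_filter, Nat.mem_divisors] at ha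
    exact ⟨ha.1.1, fun h0 => hd0 (by simpa [h0] using ha.1.1), ha.2⟩
  unfold S
  refine Finset.sum_involution
    (fun a _ => if p ^ k ∣ a then a / p else if p ^ (k - 1) ∣ a then a * p else a)
    ?_ ?_ ?_ ?_
  · intro a ha
    obtain ⟨had, ha0, ha1⟩ := haux a ha
    by_cases h1 : p ^ k ∣ a
    · obtain ⟨hpa, _, hdiv_eq, hnd, _, _⟩ := key1 a had ha0 h1
      simp only [if_pos h1]
      rw [hdiv_eq, hmu _ hnd]
      ring
    · by_cases h2 : p ^ (k - 1) ∣ a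
      · obtain ⟨hapd, hpk⟩ := key2 a had ha0 h1 h2
        obtain ⟨_, _, hdiv_eq, hnd, _, _⟩ := key1 (a * p) hapd (mul_ne_zero ha0 hppos.ne') hpk
        rw [Nat.mul_div_cancel a hppos] at hdiv_eq
        simp only [if_neg h1, if_pos h2]
        rw [hdiv_eq, hmu _ hnd]
        ring
      · simp only [if_neg h1, if_neg h2]
        rw [key3 a had ha0 h2]
        simp
  · intro a ha hfa
    obtain ⟨had, ha0, _⟩ := haux a ha
    by_cases h1 : p ^ k ∣ a
    · simp only [if_pos h1]
      have : a / p < a := Nat.div_lt_self (Nat.pos_of_ne_zero ha0) hp.one_lt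
      omega
    · by_cases h2 : p ^ (k - 1) ∣ a
      · simp only [if_neg h1, if_pos h2]
        intro hEq
        have : p = 1 := by
          have h : a * p = a * 1 := by omega
          exact Nat.eq_of_mul_eq_mul_left (Nat.pos_of_ne_zero ha0) h
        exact hp.one_lt.ne' this
      · exact absurd (key3 a had ha0 h2) hfa
  · intro a ha
    obtain ⟨had, ha0, ha1⟩ := haux a ha
    simp only [Finset.mem_filter, Nat.mem_divisors]
    by_cases h1 : p ^ k ∣ a
    · obtain ⟨hpa, hapd, _, _, _, _⟩ := key1 a had ha0 h1
      rw [if_pos h1]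
      exact ⟨⟨hapd, hd0⟩, hdivmod a hpa ha1⟩
    · by_cases h2 : p ^ (k - 1) ∣ a
      · obtain ⟨hapd, _⟩ := key2 a had ha0 h1 h2
        rw [if_neg h1, if_pos h2]
        exact ⟨⟨hapd, hd0⟩, hmul a ha1⟩
      · rw [if_neg h1, if_neg h2]
        exact ⟨⟨had, hd0⟩, ha1⟩
  · intro a ha
    obtain ⟨had, ha0, _⟩ := haux a ha
    by_cases h1 : p ^ k ∣ a
    · obtain ⟨hpa, _, _, _, hnk, hk1⟩ := key1 a had ha0 h1
      simp only [if_pos h1, if_neg hnk, if_pos hk1]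
      exact Nat.div_mul_cancel hpa
    · by_cases h2 : p ^ (k - 1) ∣ a
      · obtain ⟨hapd, hpk⟩ := key2 a had ha0 h1 h2
        simp only [if_neg h1, if_pos h2, if_pos hpk]
        exact Nat.mul_div_cancel a hppos
      · simp only [if_neg h1, if_neg h2]
end
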